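/- arXiv:2002.10862 — 3 statements merged into one kernel-verified Lean document; each statement's English description precedes it below -/
import Mathlib

section
/- Let ω ∈ W^{1,1}([a,b]) and define M : W^{1,1}([a,b]) → W^{1,1}([a,b]) by M_x(t) = max{ω(t), x(t)}. Then M is continuous with respect to the W^{1,1} norm. -/
open MeasureTheory Set Filter

/-- `f ∈ W^{1,1}([a,b])` with (a.e.) derivative `f'`. -/
def IsW11On (a b : ℝ) (f f' : ℝ → ℝ) : Prop :=
  IntegrableOn f' (Icc a b) ∧ ∀ t ∈ Icc a b, f t = f a + ∫ s in a..t, f' s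


section helpers
variable {a b : ℝ} {h h' : ℝ → ℝ}

lemma W11.intervalIntegrable (hint : IntegrableOn h' (Icc a b)) {t : ℝ} (ht : t ∈ Icc a b) :
    IntervalIntegrable h' volume a t := by
  rw [_root_.intervalIntegrable_iff_integrableOn_Ioc_of_le ht.1]
  exact hint.mono_set (Ioc_subset_Icc_self.trans (Icc_subset_Icc le_rfl ht.2))

lemma W11.continuousOn (hint : IntegrableOn h' (Icc a b))
    (hrep : ∀ t ∈ Icc a b, h t = h a + ∫ s in a..t, h' s) :
    ContinuousOn h (Icc a b) := by
  have h1 : ContinuousOn (fun t => h a + ∫ s in Set.Ioc a t, h' s) (Icc a b) :=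
    continuousOn_const.add (intervalIntegral.continuousOn_primitive hint)
  refine ContinuousOn.congr h1 ?_
  intro t ht
  rw [hrep t ht, intervalIntegral.integral_of_le ht.1]

lemma W11.primitive_bound (hint : IntegrableOn h' (Icc a b)) {t : ℝ} (ht : t ∈ Icc a b) :
    |∫ s in a..t, h' s| ≤ ∫ s in Icc a b, |h' s| := by
  rw [intervalIntegral.integral_of_le ht.1]
  calc |∫ s in Set.Ioc a t, h' s| ≤ ∫ s in Set.Ioc a t, |h' s| := by
        simpa using norm_integral_le_integral_norm (μ := volume.restrict (Set.Ioc a t)) h'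
    _ ≤ ∫ s in Icc a b, |h' s| := by
        apply setIntegral_mono_set hint.abs
        · filter_upwards with s using abs_nonneg _
        · exact HasSubset.Subset.eventuallyLE (Ioc_subset_Icc_self.trans (Icc_subset_Icc le_rfl ht.2))

lemma W11.comp_mul_integrableOn (hint : IntegrableOn h' (Icc a b))
    (hcont : ContinuousOn h (Icc a b)) {ρ : ℝ → ℝ} (hρc : Continuous ρ) (hρ1 : ∀ u, |ρ u| ≤ 1)
    {t : ℝ} (ht : t ∈ Icc a b) :
    IntegrableOn (fun s => ρ (h s) * h' s) (Set.Ioc a t) := by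
  have hsub : Set.Ioc a t ⊆ Icc a b := Ioc_subset_Icc_self.trans (Icc_subset_Icc le_rfl ht.2)
  have hmeas : AEStronglyMeasurable (fun s => ρ (h s) * h' s) (volume.restrict (Set.Ioc a t)) := by
    have h1 : AEStronglyMeasurable (fun s => ρ (h s)) (volume.restrict (Set.Ioc a t)) :=
      ((hρc.comp_continuousOn (hcont.mono hsub)).aestronglyMeasurable measurableSet_Ioc)
    exact h1.mul ((hint.mono_set hsub).aestronglyMeasurable)
  refine Integrable.mono' ((hint.mono_set hsub).abs) hmeas ?_
  filter_upwards with s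
  rw [norm_mul]
  calc ‖ρ (h s)‖ * ‖h' s‖ ≤ 1 * ‖h' s‖ :=
        mul_le_mul_of_nonneg_right (hρ1 _) (norm_nonneg _)
    _ = |h' s| := by rw [one_mul, Real.norm_eq_abs]

/-- Core chain-rule identity for `Φ(v) = ∫_0^v ρ`. -/
lemma W11.chain_rule (hint : IntegrableOn h' (Icc a b))
    (hrep : ∀ t ∈ Icc a b, h t = h a + ∫ s in a..t, h' s)
    {ρ : ℝ → ℝ} (hρc : Continuous ρ) (hρ0 : ∀ u, 0 ≤ ρ u) (hρ1 : ∀ u, ρ u ≤ 1)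
    {L : NNReal} (hρL : LipschitzWith L ρ) {t : ℝ} (ht : t ∈ Icc a b) :
    (∫ u in (0:ℝ)..(h t), ρ u)
      = (∫ u in (0:ℝ)..(h a), ρ u) + ∫ s in a..t, ρ (h s) * h' s := by
  have hab : a ≤ b := ht.1.trans ht.2
  have ha : a ∈ Icc a b := ⟨le_rfl, hab⟩
  have hcont : ContinuousOn h (Icc a b) := W11.continuousOn hint hrep
  have hρabs : ∀ u, |ρ u| ≤ 1 := fun u => abs_le.2 ⟨by linarith [hρ0 u], hρ1 u⟩
  have hL0 : (0:ℝ) ≤ (L:ℝ) := L.coe_nonneg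
  set Φ : ℝ → ℝ := fun v => ∫ u in (0:ℝ)..v, ρ u with hΦ
  have hΦLip : ∀ u v : ℝ, |Φ u - Φ v| ≤ |u - v| := by
    intro u v
    have h1 : Φ u - Φ v = ∫ x in v..u, ρ x :=
      intervalIntegral.integral_interval_sub_left
        (hρc.intervalIntegrable (μ := volume) _ _) (hρc.intervalIntegrable (μ := volume) _ _)
    rw [h1]
    calc ‖∫ x in v..u, ρ x‖ ≤ 1 * |u - v| := by
          refine intervalIntegral.norm_integral_le_of_norm_le_const fun x _ => ?_
          rw [Real.norm_eq_abs]; exact hρabs x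
      _ = |u - v| := one_mul _
  set M := ∫ s in Icc a b, |h' s| with hM
  have hM0 : 0 ≤ M := setIntegral_nonneg measurableSet_Icc fun s _ => abs_nonneg _
  have hP : IntegrableOn (fun s => ρ (h s) * h' s) (Set.Ioc a t) :=
    W11.comp_mul_integrableOn hint hcont hρc hρabs ht
  set X := Φ (h t) - (Φ (h a) + ∫ s in a..t, ρ (h s) * h' s) with hX
  have key : ∀ ε > (0:ℝ), |X| ≤ ε * (3 + L * M) := by
    intro ε hε
    have hext : Integrable ((Icc a b).indicator h') volume :=
      (integrable_indicator_iff measurableSet_Icc).2 hint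
    obtain ⟨w, -, hwδ, hwc, hwint⟩ := hext.exists_hasCompactSupport_integral_sub_le hε
    set δ := ∫ s, ‖(Icc a b).indicator h' s - w s‖ with hδdef
    have hδ0 : 0 ≤ δ := integral_nonneg fun s => norm_nonneg _
    have hwh' : IntegrableOn (fun s => w s - h' s) (Icc a b) := hwc.integrableOn_Icc.sub hint
    have hIccδ : ∫ s in Icc a b, |w s - h' s| ≤ δ := by
      have h1 : ∫ s in Icc a b, |w s - h' s|
          = ∫ s in Icc a b, ‖(Icc a b).indicator h' s - w s‖ := by
        refine setIntegral_congr_fun measurableSet_Icc fun s hs => ?_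
        rw [Set.indicator_of_mem hs, Real.norm_eq_abs, abs_sub_comm]
      rw [h1]
      refine setIntegral_le_integral (hext.sub hwint).norm ?_
      filter_upwards with s using norm_nonneg _
    set H : ℝ → ℝ := fun u => h a + ∫ s in a..u, w s with hH
    have hHc : Continuous H :=
      continuous_const.add (intervalIntegral.continuous_primitive
        (fun u v => hwc.intervalIntegrable u v) a)
    have hHd : ∀ s, HasDerivAt H (w s) s := by
      intro s
      exact (intervalIntegral.integral_hasDerivAt_right (hwc.intervalIntegrable a s)
        (hwc.stronglyMeasurableAtFilter _ _) hwc.continuousAt).const_add (h a)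
    have hΦd : ∀ v, HasDerivAt Φ (ρ v) v := by
      intro v
      exact intervalIntegral.integral_hasDerivAt_right (hρc.intervalIntegrable 0 v)
        (hρc.stronglyMeasurableAtFilter _ _) hρc.continuousAt
    have hcomp : ∀ s, HasDerivAt (fun u => Φ (H u)) (ρ (H s) * w s) s := fun s =>
      (hΦd (H s)).comp s (hHd s)
    have hFTC : ∫ s in a..t, ρ (H s) * w s = Φ (H t) - Φ (H a) :=
      intervalIntegral.integral_eq_sub_of_hasDerivAt (fun s _ => hcomp s)
        (((hρc.comp hHc).mul hwc).intervalIntegrable a t)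
    have hHh : ∀ s ∈ Icc a b, |H s - h s| ≤ δ := by
      intro s hs
      have h2 : H s - h s = ∫ u in a..s, (w u - h' u) := by
        rw [hrep s hs, hH]
        have h3 : (h a + ∫ u in a..s, w u) - (h a + ∫ u in a..s, h' u)
            = (∫ u in a..s, w u) - ∫ u in a..s, h' u := by ring
        rw [h3, ← intervalIntegral.integral_sub (hwc.intervalIntegrable a s)
          (W11.intervalIntegrable hint hs)]
      rw [h2]
      exact (W11.primitive_bound hwh' hs).trans hIccδ
    have estB : |(∫ s in a..t, ρ (H s) * w s) - ∫ s in a..t, ρ (h s) * h' s|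
        ≤ δ + L * δ * M := by
      have hPw : IntegrableOn (fun s => ρ (H s) * w s) (Set.Ioc a t) :=
        ((hρc.comp hHc).mul hwc).integrableOn_Ioc
      have hsub : Set.Ioc a t ⊆ Icc a b := Ioc_subset_Icc_self.trans (Icc_subset_Icc le_rfl ht.2)
      have hI1 : IntegrableOn (fun s => |w s - h' s|) (Set.Ioc a t) := (hwh'.mono_set hsub).abs
      have hI2 : IntegrableOn (fun s => (L * δ) * |h' s|) (Set.Ioc a t) :=
        ((hint.mono_set hsub).abs).const_mul _
      rw [intervalIntegral.integral_of_le ht.1, intervalIntegral.integral_of_le ht.1,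
        ← integral_sub hPw hP]
      calc |∫ s in Set.Ioc a t, (ρ (H s) * w s - ρ (h s) * h' s)|
          ≤ ∫ s in Set.Ioc a t, |ρ (H s) * w s - ρ (h s) * h' s| := by
            simpa using norm_integral_le_integral_norm
              (μ := volume.restrict (Set.Ioc a t)) (fun s => ρ (H s) * w s - ρ (h s) * h' s)
        _ ≤ ∫ s in Set.Ioc a t, (|w s - h' s| + (L * δ) * |h' s|) := by
            refine setIntegral_mono_on (hPw.sub hP).abs (hI1.add hI2) measurableSet_Ioc ?_
            intro s hs
            have hsIcc : s ∈ Icc a b := hsub hs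
            have e1 : ρ (H s) * w s - ρ (h s) * h' s
                = ρ (H s) * (w s - h' s) + (ρ (H s) - ρ (h s)) * h' s := by ring
            have b1 : |ρ (H s) * (w s - h' s)| ≤ |w s - h' s| := by
              rw [abs_mul]
              calc |ρ (H s)| * |w s - h' s| ≤ 1 * |w s - h' s| :=
                    mul_le_mul_of_nonneg_right (hρabs _) (abs_nonneg _)
                _ = |w s - h' s| := one_mul _
            have b2 : |(ρ (H s) - ρ (h s)) * h' s| ≤ (L * δ) * |h' s| := by
              rw [abs_mul]
              have b3 : |ρ (H s) - ρ (h s)| ≤ (L : ℝ) * |H s - h s| := by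
                have := hρL.dist_le_mul (H s) (h s)
                rwa [Real.dist_eq, Real.dist_eq] at this
              have b4 : (L : ℝ) * |H s - h s| ≤ L * δ :=
                mul_le_mul_of_nonneg_left (hHh s hsIcc) hL0
              exact mul_le_mul_of_nonneg_right (b3.trans b4) (abs_nonneg _)
            calc |ρ (H s) * w s - ρ (h s) * h' s|
                ≤ |ρ (H s) * (w s - h' s)| + |(ρ (H s) - ρ (h s)) * h' s| := by
                  rw [e1]; exact abs_add_le _ _
              _ ≤ |w s - h' s| + (L * δ) * |h' s| := add_le_add b1 b2
        _ = (∫ s in Set.Ioc a t, |w s - h' s|)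
              + (L * δ) * ∫ s in Set.Ioc a t, |h' s| := by
            rw [integral_add hI1 hI2, MeasureTheory.integral_const_mul]
        _ ≤ δ + (L * δ) * M := by
            have c1 : (∫ s in Set.Ioc a t, |w s - h' s|) ≤ δ := by
              refine le_trans ?_ hIccδ
              refine setIntegral_mono_set hwh'.abs ?_ (HasSubset.Subset.eventuallyLE hsub)
              filter_upwards with s using abs_nonneg _
            have c2 : (∫ s in Set.Ioc a t, |h' s|) ≤ M := by
              refine setIntegral_mono_set hint.abs ?_ (HasSubset.Subset.eventuallyLE hsub)
              filter_upwards with s using abs_nonneg _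
            have c3 : (0:ℝ) ≤ L * δ := mul_nonneg hL0 hδ0
            have := mul_le_mul_of_nonneg_left c2 c3
            linarith
        _ = δ + L * δ * M := by ring
    have estAt : |Φ (h t) - Φ (H t)| ≤ δ := (hΦLip _ _).trans (by
      rw [abs_sub_comm]; exact hHh t ht)
    have estAa : |Φ (h a) - Φ (H a)| ≤ δ := (hΦLip _ _).trans (by
      rw [abs_sub_comm]; exact hHh a ha)
    have hXeq : X = (Φ (h t) - Φ (H t)) - (Φ (h a) - Φ (H a))
        + ((∫ s in a..t, ρ (H s) * w s) - ∫ s in a..t, ρ (h s) * h' s) := by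
      rw [hX, hFTC]; ring
    have habs : |X| ≤ δ + δ + (δ + L * δ * M) := by
      rw [hXeq]
      calc |(Φ (h t) - Φ (H t)) - (Φ (h a) - Φ (H a))
            + ((∫ s in a..t, ρ (H s) * w s) - ∫ s in a..t, ρ (h s) * h' s)|
          ≤ |(Φ (h t) - Φ (H t)) - (Φ (h a) - Φ (H a))|
            + |(∫ s in a..t, ρ (H s) * w s) - ∫ s in a..t, ρ (h s) * h' s| := abs_add_le _ _
        _ ≤ (|Φ (h t) - Φ (H t)| + |Φ (h a) - Φ (H a)|)
            + |(∫ s in a..t, ρ (H s) * w s) - ∫ s in a..t, ρ (h s) * h' s| := by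
            have := abs_sub (Φ (h t) - Φ (H t)) (Φ (h a) - Φ (H a))
            linarith
        _ ≤ δ + δ + (δ + L * δ * M) := by
            have := estAt; have := estAa; have := estB; linarith
    calc |X| ≤ δ + δ + (δ + L * δ * M) := habs
      _ = δ * (3 + L * M) := by ring
      _ ≤ ε * (3 + L * M) := by
          have hd : (0:ℝ) ≤ 3 + L * M := by positivity
          exact mul_le_mul_of_nonneg_right hwδ hd
  have hX0 : |X| ≤ 0 := by
    refine le_of_forall_pos_le_add fun ε hε => ?_
    have hden : (0:ℝ) < 3 + L * M := by positivity
    calc |X| ≤ (ε / (3 + L * M)) * (3 + L * M) := key _ (by positivity)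
      _ = ε := div_mul_cancel₀ ε hden.ne'
      _ ≤ 0 + ε := by linarith
  have hfin : X = 0 := abs_nonpos_iff.1 hX0
  rw [hX] at hfin
  linarith

end helpers

section posPart
variable {a b : ℝ} {h h' : ℝ → ℝ}

/-- Uniform bound for smoothed positive-part. -/
lemma approx_posPart {ρ : ℝ → ℝ} (hρ0 : ∀ u, 0 ≤ ρ u) (hρ1 : ∀ u, ρ u ≤ 1)
    (hρint : ∀ u v : ℝ, IntegrableOn ρ (Set.Ioc u v))
    {α β : ℝ} (hα : α ≤ 0) (hβ : 0 ≤ β)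
    (hρa : ∀ u, u ≤ α → ρ u = 0) (hρb : ∀ u, β ≤ u → ρ u = 1) (v : ℝ) :
    |(∫ u in (0:ℝ)..v, ρ u) - max v 0| ≤ β - α := by
  have hvol : ∀ s : Set ℝ, ((volume (Set.Ioc α β ∩ s)).toReal : ℝ) ≤ β - α := by
    intro s
    have h1 : volume (Set.Ioc α β ∩ s) ≤ volume (Set.Ioc α β) :=
      measure_mono inter_subset_left
    have h2 : volume (Set.Ioc α β) = ENNReal.ofReal (β - α) := Real.volume_Ioc
    calc (volume (Set.Ioc α β ∩ s)).toReal
        ≤ (volume (Set.Ioc α β)).toReal := by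
          refine ENNReal.toReal_mono ?_ h1
          rw [h2]; exact ENNReal.ofReal_ne_top
      _ = β - α := by rw [h2, ENNReal.toReal_ofReal (by linarith)]
  have hconst : ∀ u v : ℝ, IntegrableOn (fun _ : ℝ => (1:ℝ)) (Set.Ioc u v) := by
    intro u v
    refine integrableOn_const ?_
    simp [Real.volume_Ioc]
  have hindint : ∀ u v : ℝ,
      IntegrableOn ((Set.Ioc α β).indicator (fun _ => (1:ℝ))) (Set.Ioc u v) := fun u v =>
    (hconst u v).indicator measurableSet_Ioc
  rcases le_or_gt 0 v with hv | hv
  · rw [max_eq_left hv, intervalIntegral.integral_of_le hv]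
    have hv1 : (∫ u in Set.Ioc (0:ℝ) v, (1:ℝ)) = v := by
      simp [Real.volume_Ioc, ENNReal.toReal_ofReal hv, hv]
    have e1 : (∫ u in Set.Ioc (0:ℝ) v, ρ u) - v
        = -∫ u in Set.Ioc (0:ℝ) v, (1 - ρ u) := by
      rw [integral_sub (hconst 0 v) (hρint 0 v), hv1]; ring
    rw [e1, abs_neg]
    have hnn : 0 ≤ ∫ u in Set.Ioc (0:ℝ) v, (1 - ρ u) :=
      setIntegral_nonneg measurableSet_Ioc fun u _ => by linarith [hρ1 u]
    rw [abs_of_nonneg hnn]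
    calc (∫ u in Set.Ioc (0:ℝ) v, (1 - ρ u))
        ≤ ∫ u in Set.Ioc (0:ℝ) v, (Set.Ioc α β).indicator (fun _ => (1:ℝ)) u := by
          refine setIntegral_mono_on ((hconst 0 v).sub (hρint 0 v)) (hindint 0 v)
            measurableSet_Ioc ?_
          intro u hu
          by_cases hmem : u ∈ Set.Ioc α β
          · rw [Set.indicator_of_mem hmem]; linarith [hρ0 u]
          · rw [Set.indicator_of_notMem hmem]
            have hβu : β < u := by
              rcases lt_or_ge β u with h3 | h3
              · exact h3
              · exact absurd ⟨hα.trans_lt hu.1, h3⟩ hmem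
            rw [hρb u hβu.le]; linarith
      _ = (volume (Set.Ioc α β ∩ Set.Ioc 0 v)).toReal := by
          rw [setIntegral_indicator measurableSet_Ioc]
          rw [setIntegral_const, smul_eq_mul, mul_one, Set.inter_comm, measureReal_def]
      _ ≤ β - α := hvol _
  · rw [max_eq_right hv.le, intervalIntegral.integral_of_ge hv.le, sub_zero, abs_neg]
    have hnn : 0 ≤ ∫ u in Set.Ioc v 0, ρ u :=
      setIntegral_nonneg measurableSet_Ioc fun u _ => hρ0 u
    rw [abs_of_nonneg hnn]
    calc (∫ u in Set.Ioc v (0:ℝ), ρ u)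
        ≤ ∫ u in Set.Ioc v (0:ℝ), (Set.Ioc α β).indicator (fun _ => (1:ℝ)) u := by
          refine setIntegral_mono_on (hρint v 0) (hindint v 0) measurableSet_Ioc ?_
          intro u hu
          by_cases hmem : u ∈ Set.Ioc α β
          · rw [Set.indicator_of_mem hmem]; exact hρ1 u
          · rw [Set.indicator_of_notMem hmem]
            have huα : u ≤ α := by
              rcases le_or_gt u α with h3 | h3
              · exact h3
              · exact absurd ⟨h3, hu.2.trans hβ⟩ hmem
            rw [hρa u huα]
      _ = (volume (Set.Ioc α β ∩ Set.Ioc v 0)).toReal := by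
          rw [setIntegral_indicator measurableSet_Ioc]
          rw [setIntegral_const, smul_eq_mul, mul_one, Set.inter_comm, measureReal_def]
      _ ≤ β - α := hvol _

end posPart

section posPartRep
open Topology
variable {a b : ℝ} {h h' : ℝ → ℝ}

lemma W11.posPart_rep_aux (hint : IntegrableOn h' (Icc a b))
    (hrep : ∀ t ∈ Icc a b, h t = h a + ∫ s in a..t, h' s)
    (ρ : ℕ → ℝ → ℝ) (ind : ℝ → ℝ)
    (hρc : ∀ j, Continuous (ρ j)) (hρ0 : ∀ j u, 0 ≤ ρ j u) (hρ1 : ∀ j u, ρ j u ≤ 1)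
    (hρL : ∀ j, ∃ L : NNReal, LipschitzWith L (ρ j))
    (happrox : ∀ (j : ℕ) (v : ℝ), |(∫ u in (0:ℝ)..v, ρ j u) - max v 0| ≤ 1/(j+1))
    (hptw : ∀ u, Tendsto (fun j => ρ j u) atTop (𝓝 (ind u)))
    {t : ℝ} (ht : t ∈ Icc a b) :
    max (h t) 0 = max (h a) 0 + ∫ s in Set.Ioc a t, ind (h s) * h' s := by
  have hcont : ContinuousOn h (Icc a b) := W11.continuousOn hint hrep
  have hsub : Set.Ioc a t ⊆ Icc a b := Ioc_subset_Icc_self.trans (Icc_subset_Icc le_rfl ht.2)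
  have hchain : ∀ j, (∫ u in (0:ℝ)..(h t), ρ j u)
      = (∫ u in (0:ℝ)..(h a), ρ j u) + ∫ s in Set.Ioc a t, ρ j (h s) * h' s := by
    intro j
    obtain ⟨L, hL⟩ := hρL j
    have := W11.chain_rule hint hrep (hρc j) (hρ0 j) (hρ1 j) hL ht
    rwa [intervalIntegral.integral_of_le ht.1] at this
  have hone : Tendsto (fun j : ℕ => 1/((j:ℝ)+1)) atTop (𝓝 0) :=
    tendsto_one_div_add_atTop_nhds_zero_nat
  have lΦ : ∀ v : ℝ, Tendsto (fun j => ∫ u in (0:ℝ)..v, ρ j u) atTop (𝓝 (max v 0)) := by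
    intro v
    rw [← tendsto_sub_nhds_zero_iff]
    exact squeeze_zero_norm (fun j => by
      simpa [Real.norm_eq_abs] using happrox j v) hone
  have l3 : Tendsto (fun j => ∫ s in Set.Ioc a t, ρ j (h s) * h' s) atTop
      (𝓝 (∫ s in Set.Ioc a t, ind (h s) * h' s)) := by
    refine tendsto_integral_of_dominated_convergence (fun s => |h' s|) ?_ ?_ ?_ ?_
    · intro j
      exact (W11.comp_mul_integrableOn hint hcont (hρc j)
        (fun u => abs_le.2 ⟨by linarith [hρ0 j u], hρ1 j u⟩) ht).aestronglyMeasurable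
    · exact (hint.mono_set hsub).abs
    · intro j
      filter_upwards with s
      rw [norm_mul, Real.norm_eq_abs, Real.norm_eq_abs]
      calc |ρ j (h s)| * |h' s| ≤ 1 * |h' s| :=
            mul_le_mul_of_nonneg_right
              (abs_le.2 ⟨by linarith [hρ0 j (h s)], hρ1 j (h s)⟩) (abs_nonneg _)
        _ = |h' s| := one_mul _
    · filter_upwards with s
      exact (hptw (h s)).mul_const (h' s)
  have lrhs : Tendsto (fun j => ∫ u in (0:ℝ)..(h t), ρ j u) atTop
      (𝓝 (max (h a) 0 + ∫ s in Set.Ioc a t, ind (h s) * h' s)) := by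
    rw [funext hchain]
    exact (lΦ (h a)).add l3
  exact tendsto_nhds_unique (lΦ (h t)) lrhs

/-- Positive part of a `W¹¹` function, strict-indicator version. -/
lemma W11.posPart_rep_lt (hint : IntegrableOn h' (Icc a b))
    (hrep : ∀ t ∈ Icc a b, h t = h a + ∫ s in a..t, h' s) {t : ℝ} (ht : t ∈ Icc a b) :
    max (h t) 0 = max (h a) 0
      + ∫ s in Set.Ioc a t, (if 0 < h s then (1:ℝ) else 0) * h' s := by
  have hjpos : ∀ j : ℕ, (0:ℝ) < (j:ℝ) + 1 := fun j => by positivity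
  refine W11.posPart_rep_aux hint hrep
    (fun j u => max (min (((j:ℝ)+1) * u) 1) 0) (fun u => if 0 < u then (1:ℝ) else 0)
    (fun j => ((continuous_const.mul continuous_id).min continuous_const).max continuous_const)
    (fun j u => le_max_right _ _) (fun j u => max_le (min_le_right _ _) zero_le_one)
    ?_ ?_ ?_ ht
  · intro j
    refine ⟨(j+1 : NNReal), LipschitzWith.of_dist_le_mul fun u v => ?_⟩
    rw [Real.dist_eq, Real.dist_eq]
    calc |max (min (((j:ℝ)+1) * u) 1) 0 - max (min (((j:ℝ)+1) * v) 1) 0|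
        ≤ |min (((j:ℝ)+1) * u) 1 - min (((j:ℝ)+1) * v) 1| := abs_max_sub_max_le_abs _ _ _
      _ ≤ |((j:ℝ)+1) * u - ((j:ℝ)+1) * v| := by
          simpa using abs_min_sub_min_le_max (((j:ℝ)+1) * u) 1 (((j:ℝ)+1) * v) 1
      _ = ((j:ℝ)+1) * |u - v| := by
          rw [show ((j:ℝ)+1) * u - ((j:ℝ)+1) * v = ((j:ℝ)+1)*(u-v) by ring,
            abs_mul, abs_of_nonneg (hjpos j).le]
      _ = ((j+1 : NNReal) : ℝ) * |u - v| := by push_cast; ring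
  · intro j v
    have hres := approx_posPart (ρ := fun u => max (min (((j:ℝ)+1) * u) 1) 0)
      (fun u => le_max_right _ _) (fun u => max_le (min_le_right _ _) zero_le_one)
      (fun u v => (((continuous_const.mul continuous_id).min continuous_const).max
        continuous_const).integrableOn_Ioc)
      (α := (0:ℝ)) (β := 1/((j:ℝ)+1))
      (le_refl (0:ℝ)) (by positivity) (fun u hu => ?_) (fun u hu => ?_) v
    · simpa using hres
    · have h1 : ((j:ℝ)+1) * u ≤ 0 := mul_nonpos_iff.2 (Or.inl ⟨(hjpos j).le, hu⟩)
      beta_reduce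
      rw [max_eq_right (min_le_of_left_le h1)]
    · have h1 : (1:ℝ) ≤ ((j:ℝ)+1) * u := by
        rw [div_le_iff₀ (hjpos j)] at hu
        linarith
      beta_reduce
      rw [min_eq_right h1, max_eq_left zero_le_one]
  · intro u
    beta_reduce
    rcases le_or_gt u 0 with hu | hu
    · rw [if_neg (not_lt.2 hu)]
      have he : (fun j : ℕ => max (min (((j:ℝ)+1) * u) 1) 0) = fun _ => (0:ℝ) := by
        funext j
        rw [max_eq_right (min_le_of_left_le (mul_nonpos_iff.2 (Or.inl ⟨(hjpos j).le, hu⟩)))]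
      rw [he]; exact tendsto_const_nhds
    · rw [if_pos hu]
      refine tendsto_const_nhds.congr' ?_
      rw [EventuallyEq, eventually_atTop]
      obtain ⟨N, hN⟩ := exists_nat_gt (1/u)
      refine ⟨N, fun j hj => ?_⟩
      have h1 : (1:ℝ) ≤ ((j:ℝ)+1) * u := by
        have h2 : (1/u) < (j:ℝ)+1 :=
          hN.trans_le (by push_cast; linarith [(Nat.cast_le (α := ℝ)).2 hj])
        rw [div_lt_iff₀ hu] at h2
        linarith
      rw [min_eq_right h1, max_eq_left zero_le_one]

/-- Positive part of a `W¹¹` function, non-strict-indicator version. -/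
lemma W11.posPart_rep_le (hint : IntegrableOn h' (Icc a b))
    (hrep : ∀ t ∈ Icc a b, h t = h a + ∫ s in a..t, h' s) {t : ℝ} (ht : t ∈ Icc a b) :
    max (h t) 0 = max (h a) 0
      + ∫ s in Set.Ioc a t, (if 0 ≤ h s then (1:ℝ) else 0) * h' s := by
  have hjpos : ∀ j : ℕ, (0:ℝ) < (j:ℝ) + 1 := fun j => by positivity
  refine W11.posPart_rep_aux hint hrep
    (fun j u => max (min (((j:ℝ)+1) * u + 1) 1) 0) (fun u => if 0 ≤ u then (1:ℝ) else 0)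
    (fun j => (((continuous_const.mul continuous_id).add continuous_const).min
      continuous_const).max continuous_const)
    (fun j u => le_max_right _ _) (fun j u => max_le (min_le_right _ _) zero_le_one)
    ?_ ?_ ?_ ht
  · intro j
    refine ⟨(j+1 : NNReal), LipschitzWith.of_dist_le_mul fun u v => ?_⟩
    rw [Real.dist_eq, Real.dist_eq]
    calc |max (min (((j:ℝ)+1) * u + 1) 1) 0 - max (min (((j:ℝ)+1) * v + 1) 1) 0|
        ≤ |min (((j:ℝ)+1) * u + 1) 1 - min (((j:ℝ)+1) * v + 1) 1| :=
          abs_max_sub_max_le_abs _ _ _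
      _ ≤ |(((j:ℝ)+1) * u + 1) - (((j:ℝ)+1) * v + 1)| := by
          simpa using abs_min_sub_min_le_max (((j:ℝ)+1) * u + 1) 1 (((j:ℝ)+1) * v + 1) 1
      _ = ((j:ℝ)+1) * |u - v| := by
          rw [show (((j:ℝ)+1) * u + 1) - (((j:ℝ)+1) * v + 1) = ((j:ℝ)+1)*(u-v) by ring,
            abs_mul, abs_of_nonneg (hjpos j).le]
      _ = ((j+1 : NNReal) : ℝ) * |u - v| := by push_cast; ring
  · intro j v
    have hres := approx_posPart (ρ := fun u => max (min (((j:ℝ)+1) * u + 1) 1) 0)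
      (fun u => le_max_right _ _) (fun u => max_le (min_le_right _ _) zero_le_one)
      (fun u v => ((((continuous_const.mul continuous_id).add continuous_const).min
        continuous_const).max continuous_const).integrableOn_Ioc)
      (α := -(1/((j:ℝ)+1))) (β := 0)
      (by rw [neg_nonpos]; positivity) (le_refl (0:ℝ)) (fun u hu => ?_) (fun u hu => ?_) v
    · simpa using hres
    · have h1 : ((j:ℝ)+1) * u + 1 ≤ 0 := by
        have h3 : ((j:ℝ)+1) * u ≤ ((j:ℝ)+1) * (-(1/((j:ℝ)+1))) :=
          mul_le_mul_of_nonneg_left hu (hjpos j).le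
        rw [mul_neg, mul_one_div, div_self (hjpos j).ne'] at h3
        linarith
      beta_reduce
      rw [max_eq_right (min_le_of_left_le h1)]
    · have h1 : (1:ℝ) ≤ ((j:ℝ)+1) * u + 1 := by nlinarith [hjpos j]
      beta_reduce
      rw [min_eq_right h1, max_eq_left zero_le_one]
  · intro u
    beta_reduce
    rcases le_or_gt 0 u with hu | hu
    · rw [if_pos hu]
      have he : (fun j : ℕ => max (min (((j:ℝ)+1) * u + 1) 1) 0) = fun _ => (1:ℝ) := by
        funext j
        rw [min_eq_right (by nlinarith [hjpos j]), max_eq_left zero_le_one]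
      rw [he]; exact tendsto_const_nhds
    · rw [if_neg (not_le.2 hu)]
      refine tendsto_const_nhds.congr' ?_
      rw [EventuallyEq, eventually_atTop]
      obtain ⟨N, hN⟩ := exists_nat_gt (-(1/u))
      refine ⟨N, fun j hj => ?_⟩
      have h2 : -(1/u) < (j:ℝ)+1 :=
        hN.trans_le (by push_cast; linarith [(Nat.cast_le (α := ℝ)).2 hj])
      have h3 : ((j:ℝ)+1) * u < (-(1/u)) * u := mul_lt_mul_of_neg_right h2 hu
      rw [neg_mul, one_div, inv_mul_cancel₀ hu.ne] at h3
      have h1 : ((j:ℝ)+1) * u + 1 ≤ 0 := by linarith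
      rw [max_eq_right (min_le_of_left_le h1)]

end posPartRep

section levelset
open Topology
variable {a b : ℝ} {h h' : ℝ → ℝ}

lemma W11.ind_mul_integrableOn (hint : IntegrableOn h' (Icc a b))
    (hcont : ContinuousOn h (Icc a b))
    {f : ℝ → ℝ} (hf : Measurable f) (hf1 : ∀ v, |f v| ≤ 1)
    {S : Set ℝ} (hS : MeasurableSet S) (hsub : S ⊆ Icc a b) :
    IntegrableOn (fun s => f (h s) * h' s) S := by
  have hmeas : AEStronglyMeasurable (fun s => f (h s) * h' s) (volume.restrict S) := by
    have h1 : AEMeasurable h (volume.restrict S) := (hcont.mono hsub).aemeasurable hS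
    exact ((hf.comp_aemeasurable h1).aestronglyMeasurable).mul
      (hint.mono_set hsub).aestronglyMeasurable
  refine Integrable.mono' ((hint.mono_set hsub).abs) hmeas ?_
  filter_upwards with s
  rw [norm_mul]
  calc ‖f (h s)‖ * ‖h' s‖ ≤ 1 * ‖h' s‖ :=
        mul_le_mul_of_nonneg_right (hf1 _) (norm_nonneg _)
    _ = |h' s| := by rw [one_mul, Real.norm_eq_abs]

lemma measurable_ind_le : Measurable (fun v : ℝ => if 0 ≤ v then (1:ℝ) else 0) :=
  Measurable.ite measurableSet_Ici measurable_const measurable_const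

lemma measurable_ind_lt : Measurable (fun v : ℝ => if 0 < v then (1:ℝ) else 0) :=
  Measurable.ite measurableSet_Ioi measurable_const measurable_const

/-- a.e. on the zero set of `h`, the density `h'` vanishes. -/
lemma W11.levelset (hint : IntegrableOn h' (Icc a b))
    (hrep : ∀ t ∈ Icc a b, h t = h a + ∫ s in a..t, h' s) :
    ∀ᵐ s ∂(volume.restrict (Icc a b)), h s = 0 → h' s = 0 := by
  rcases le_or_gt a b with hab | hab
  swap
  · rw [Icc_eq_empty (not_le.2 hab), Measure.restrict_empty]
    simp
  have hcont : ContinuousOn h (Icc a b) := W11.continuousOn hint hrep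
  set q : ℝ → ℝ := fun s =>
    (if 0 ≤ h s then (1:ℝ) else 0) * h' s - (if 0 < h s then (1:ℝ) else 0) * h' s with hq
  have hqint : ∀ {S : Set ℝ}, MeasurableSet S → S ⊆ Icc a b → IntegrableOn q S := by
    intro S hS hsub
    exact (W11.ind_mul_integrableOn hint hcont measurable_ind_le
        (fun v => by split <;> simp) hS hsub).sub
      (W11.ind_mul_integrableOn hint hcont measurable_ind_lt
        (fun v => by split <;> simp) hS hsub)
  have hzero : ∀ t ∈ Icc a b, ∫ s in Set.Ioc a t, q s = 0 := by
    intro t ht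
    have hsub : Set.Ioc a t ⊆ Icc a b := Ioc_subset_Icc_self.trans (Icc_subset_Icc le_rfl ht.2)
    have h1 := W11.posPart_rep_le hint hrep ht
    have h2 := W11.posPart_rep_lt hint hrep ht
    have h3 : ∫ s in Set.Ioc a t, q s
        = (∫ s in Set.Ioc a t, (if 0 ≤ h s then (1:ℝ) else 0) * h' s)
          - ∫ s in Set.Ioc a t, (if 0 < h s then (1:ℝ) else 0) * h' s := by
      rw [hq, integral_sub (W11.ind_mul_integrableOn hint hcont measurable_ind_le
          (fun v => by split <;> simp) measurableSet_Ioc hsub)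
        (W11.ind_mul_integrableOn hint hcont measurable_ind_lt
          (fun v => by split <;> simp) measurableSet_Ioc hsub)]
    rw [h3]
    have := h1.symm.trans h2
    linarith [this]
  -- integral of q over arbitrary subintervals of [a,b] vanishes
  have hzero2 : ∀ u v : ℝ, a ≤ u → u ≤ v → v ≤ b → ∫ s in Set.Ioc u v, q s = 0 := by
    intro u v hau huv hvb
    have hu : u ∈ Icc a b := ⟨hau, huv.trans hvb⟩
    have hv : v ∈ Icc a b := ⟨hau.trans huv, hvb⟩
    have hdisj : Disjoint (Set.Ioc a u) (Set.Ioc u v) := Set.Ioc_disjoint_Ioc_of_le le_rfl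
    have hunion : Set.Ioc a u ∪ Set.Ioc u v = Set.Ioc a v := Set.Ioc_union_Ioc_eq_Ioc hau huv
    have h4 : ∫ s in Set.Ioc a v, q s
        = (∫ s in Set.Ioc a u, q s) + ∫ s in Set.Ioc u v, q s := by
      rw [← hunion]
      exact setIntegral_union hdisj measurableSet_Ioc
        (hqint measurableSet_Ioc (Ioc_subset_Icc_self.trans (Icc_subset_Icc le_rfl hu.2)))
        (hqint measurableSet_Ioc (fun s hs => ⟨hau.trans hs.1.le, hs.2.trans hvb⟩))
    rw [hzero v hv, hzero u hu] at h4
    linarith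
  -- the globally-extended function has vanishing integral over every interval
  set Q : ℝ → ℝ := (Icc a b).indicator q with hQ
  have hQint : Integrable Q volume :=
    (integrable_indicator_iff measurableSet_Icc).2 (hqint measurableSet_Icc (le_refl _))
  have hQIoc : ∀ c d : ℝ, ∫ s in Set.Ioc c d, Q s = 0 := by
    intro c d
    rw [hQ, setIntegral_indicator measurableSet_Icc]
    set u := max c a with hu
    set v := min d b with hv
    rcases le_or_gt v u with hvu | huv
    · have hnull : volume (Set.Ioc c d ∩ Icc a b) = 0 := by
        have hsub2 : Set.Ioc c d ∩ Icc a b ⊆ Icc u v := by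
          rintro s ⟨h5, h6⟩
          exact ⟨max_le h5.1.le h6.1, le_min h5.2 h6.2⟩
        refine measure_mono_null hsub2 ?_
        rw [Real.volume_Icc]
        simp [ENNReal.ofReal_eq_zero.2 (by linarith : v - u ≤ 0)]
      rw [Measure.restrict_eq_zero.mpr hnull]
      exact integral_zero_measure _
    · have hset : (Set.Ioc c d ∩ Icc a b : Set ℝ) =ᵐ[volume] (Set.Ioc u v : Set ℝ) := by
        have hsub1 : Set.Ioc u v ⊆ Set.Ioc c d ∩ Icc a b := by
          rintro s ⟨h5, h6⟩
          refine ⟨⟨(le_max_left c a).trans_lt h5, h6.trans (min_le_left d b)⟩,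
            ⟨((le_max_right c a).trans_lt h5).le, h6.trans (min_le_right d b)⟩⟩
        have hsub2 : Set.Ioc c d ∩ Icc a b ⊆ Set.Icc u v := by
          rintro s ⟨h5, h6⟩
          exact ⟨max_le h5.1.le h6.1, le_min h5.2 h6.2⟩
        rw [Filter.eventuallyEq_set]
        have h7 : ∀ᵐ s : ℝ, s ≠ u := by
          simpa using measure_eq_zero_iff_ae_notMem.mp (Real.volume_singleton (a := u))
        filter_upwards [h7] with s hs
        constructor
        · intro hmem
          rcases hsub2 hmem with ⟨h8, h9⟩
          exact ⟨lt_of_le_of_ne h8 (Ne.symm hs), h9⟩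
        · intro hmem
          exact hsub1 hmem
      rw [setIntegral_congr_set hset]
      exact hzero2 u v (le_max_right c a) huv.le (min_le_right d b)
  -- Lebesgue differentiation
  have hQloc : LocallyIntegrable Q volume := hQint.locallyIntegrable
  have hδ : Tendsto (fun j : ℕ => 1/((j:ℝ)+1)) atTop (𝓝[>] (0:ℝ)) := by
    rw [tendsto_nhdsWithin_iff]
    exact ⟨tendsto_one_div_add_atTop_nhds_zero_nat,
      Filter.Eventually.of_forall fun j => by simp only [Set.mem_Ioi]; positivity⟩
  have hae := IsUnifLocDoublingMeasure.ae_tendsto_average (volume : Measure ℝ) hQloc 1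
  have hQ0 : ∀ᵐ x ∂(volume : Measure ℝ), Q x = 0 := by
    filter_upwards [hae] with x hx
    have h9 := hx (fun _ => x) (fun j : ℕ => 1/((j:ℝ)+1)) hδ
      (Filter.Eventually.of_forall fun j => by
        have hjr : (0:ℝ) ≤ 1 * (1/((j:ℝ)+1)) := by positivity
        exact Metric.mem_closedBall_self hjr)
    have h10 : (fun j : ℕ => ⨍ y in Metric.closedBall x (1/((j:ℝ)+1)), Q y)
        = fun _ => (0:ℝ) := by
      funext j
      have hr : (0:ℝ) < 1/((j:ℝ)+1) := by positivity
      rw [Real.closedBall_eq_Icc, setAverage_eq, smul_eq_mul]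
      have h11 : ∫ y in Set.Icc (x - 1/((j:ℝ)+1)) (x + 1/((j:ℝ)+1)), Q y
          = ∫ y in Set.Ioc (x - 1/((j:ℝ)+1)) (x + 1/((j:ℝ)+1)), Q y :=
        integral_Icc_eq_integral_Ioc
      rw [h11, hQIoc, mul_zero]
    rw [h10] at h9
    exact (tendsto_nhds_unique tendsto_const_nhds h9).symm
  have hres : ∀ᵐ s ∂(volume.restrict (Icc a b)), Q s = 0 := ae_restrict_of_ae hQ0
  filter_upwards [hres, ae_restrict_mem measurableSet_Icc] with s hQs hmem hs0
  rw [hQ, Set.indicator_of_mem hmem, hq] at hQs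
  simpa [hs0] using hQs

end levelset

section maxlemma
variable {a b : ℝ}

lemma isW11On_max {ω ω' f f' : ℝ → ℝ} (hω : IsW11On a b ω ω') (hf : IsW11On a b f f') :
    IsW11On a b (fun t => max (ω t) (f t))
      (fun s => ω' s + (if 0 < f s - ω s then (1:ℝ) else 0) * (f' s - ω' s)) := by
  obtain ⟨hωint, hωrep⟩ := hω
  obtain ⟨hfint, hfrep⟩ := hf
  have hΔint : IntegrableOn (fun s => f s - ω s) (Icc a b) → True := fun _ => trivial
  have hΔ'int : IntegrableOn (fun s => f' s - ω' s) (Icc a b) := hfint.sub hωint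
  have hΔrep : ∀ t ∈ Icc a b,
      (fun s => f s - ω s) t = (fun s => f s - ω s) a + ∫ s in a..t, (f' s - ω' s) := by
    intro t ht
    simp only
    rw [intervalIntegral.integral_sub (W11.intervalIntegrable hfint ht)
      (W11.intervalIntegrable hωint ht), hfrep t ht, hωrep t ht]
    ring
  have hΔcont : ContinuousOn (fun s => f s - ω s) (Icc a b) := W11.continuousOn hΔ'int hΔrep
  have hindint : IntegrableOn
      (fun s => (if 0 < f s - ω s then (1:ℝ) else 0) * (f' s - ω' s)) (Icc a b) :=
    W11.ind_mul_integrableOn hΔ'int hΔcont measurable_ind_lt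
      (fun v => by split <;> simp) measurableSet_Icc subset_rfl
  constructor
  · exact hωint.add hindint
  · intro t ht
    have hsub : Set.Ioc a t ⊆ Icc a b := Ioc_subset_Icc_self.trans (Icc_subset_Icc le_rfl ht.2)
    have hmax : ∀ u v : ℝ, max u v = u + max (v - u) 0 := by
      intro u v; rcases le_total v u with h | h
      · rw [max_eq_left h, max_eq_right (by linarith : v - u ≤ 0)]; ring
      · rw [max_eq_right h, max_eq_left (by linarith : (0:ℝ) ≤ v - u)]; ring
    have e1 : ∫ s in a..t, (ω' s + (if 0 < f s - ω s then (1:ℝ) else 0) * (f' s - ω' s))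
        = (∫ s in a..t, ω' s)
          + ∫ s in Set.Ioc a t, (if 0 < f s - ω s then (1:ℝ) else 0) * (f' s - ω' s) := by
      rw [intervalIntegral.integral_of_le ht.1, intervalIntegral.integral_of_le ht.1,
        integral_add (hωint.mono_set hsub) (hindint.mono_set hsub)]
    have hpp := W11.posPart_rep_lt (h := fun s => f s - ω s) hΔ'int hΔrep ht
    have hω' := hωrep t ht
    simp only
    rw [hmax (ω t) (f t), hmax (ω a) (f a), e1]
    rw [hpp, hω']
    ring
end maxlemma

section mainthm
open Topology
/-- The operator `M_x(t) = max{ω(t), x(t)}` is (sequentially) continuous from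
`W^{1,1}([a,b])` into itself, with respect to the norm `‖x‖ = ‖x‖_{L¹} + ‖x'‖_{L¹}`. -/
theorem maxOp_continuous_W11 (a b : ℝ) (hab : a < b)
    (ω ω' : ℝ → ℝ) (hω : IsW11On a b ω ω')
    (x₀ x₀' : ℝ → ℝ) (hx₀ : IsW11On a b x₀ x₀')
    (x : ℕ → ℝ → ℝ) (x' : ℕ → ℝ → ℝ) (hx : ∀ n, IsW11On a b (x n) (x' n))
    (hconv : Tendsto (fun n =>
        (∫ t in Icc a b, |x n t - x₀ t|) + ∫ t in Icc a b, |x' n t - x₀' t|)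
      atTop (nhds 0)) :
    ∃ (g₀ : ℝ → ℝ) (g : ℕ → ℝ → ℝ),
      IsW11On a b (fun t => max (ω t) (x₀ t)) g₀ ∧
      (∀ n, IsW11On a b (fun t => max (ω t) (x n t)) (g n)) ∧
      Tendsto (fun n =>
          (∫ t in Icc a b, |max (ω t) (x n t) - max (ω t) (x₀ t)|) +
            ∫ t in Icc a b, |g n t - g₀ t|)
        atTop (nhds 0) := by
  have hW0 := isW11On_max hω hx₀
  have hWn := fun n => isW11On_max hω (hx n)
  refine ⟨fun s => ω' s + (if 0 < x₀ s - ω s then (1:ℝ) else 0) * (x₀' s - ω' s),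
    fun n s => ω' s + (if 0 < x n s - ω s then (1:ℝ) else 0) * (x' n s - ω' s),
    hW0, hWn, ?_⟩
  have hba : (0:ℝ) < b - a := by linarith
  set δ : ℕ → ℝ := fun n =>
    (∫ t in Icc a b, |x n t - x₀ t|) + ∫ t in Icc a b, |x' n t - x₀' t| with hδdef
  have hcω : ContinuousOn ω (Icc a b) := W11.continuousOn hω.1 hω.2
  have hcx₀ : ContinuousOn x₀ (Icc a b) := W11.continuousOn hx₀.1 hx₀.2
  have hcx : ∀ n, ContinuousOn (x n) (Icc a b) := fun n => W11.continuousOn (hx n).1 (hx n).2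
  have hΔ₀'int : IntegrableOn (fun s => x₀' s - ω' s) (Icc a b) := hx₀.1.sub hω.1
  have hΔ₀rep : ∀ t ∈ Icc a b,
      (fun s => x₀ s - ω s) t = (fun s => x₀ s - ω s) a + ∫ s in a..t, (x₀' s - ω' s) := by
    intro t ht
    simp only
    rw [intervalIntegral.integral_sub (W11.intervalIntegrable hx₀.1 ht)
      (W11.intervalIntegrable hω.1 ht), hx₀.2 t ht, hω.2 t ht]
    ring
  have hnn : ∀ n, 0 ≤ δ n := fun n =>
    add_nonneg (setIntegral_nonneg measurableSet_Icc fun t _ => abs_nonneg _)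
      (setIntegral_nonneg measurableSet_Icc fun t _ => abs_nonneg _)
  have hδ1 : ∀ n, (∫ t in Icc a b, |x n t - x₀ t|) ≤ δ n := fun n =>
    le_add_of_nonneg_right (setIntegral_nonneg measurableSet_Icc fun t _ => abs_nonneg _)
  have hδ2 : ∀ n, (∫ t in Icc a b, |x' n t - x₀' t|) ≤ δ n := fun n =>
    le_add_of_nonneg_left (setIntegral_nonneg measurableSet_Icc fun t _ => abs_nonneg _)
  have hvol : (volume (Icc a b)).toReal = b - a := by
    rw [Real.volume_Icc, ENNReal.toReal_ofReal hba.le]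
  have hvolfin : volume (Icc a b) < ⊤ := by
    rw [Real.volume_Icc]; exact ENNReal.ofReal_lt_top
  set C : ℝ := 1/(b-a) + 2 with hC
  have hC0 : 0 < C := by positivity
  -- uniform closeness of `x n` to `x₀` on `[a,b]`
  have hsup : ∀ n, ∀ t ∈ Icc a b, |x n t - x₀ t| ≤ C * δ n := by
    intro n t ht
    have hΔ'int : IntegrableOn (fun s => x' n s - x₀' s) (Icc a b) := (hx n).1.sub hx₀.1
    have hΔrep : ∀ s ∈ Icc a b,
        x n s - x₀ s = (x n a - x₀ a) + ∫ u in a..s, (x' n u - x₀' u) := by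
      intro s hs
      rw [intervalIntegral.integral_sub (W11.intervalIntegrable (hx n).1 hs)
        (W11.intervalIntegrable hx₀.1 hs), (hx n).2 s hs, hx₀.2 s hs]
      ring
    have hD'bound : ∀ s ∈ Icc a b, |∫ u in a..s, (x' n u - x₀' u)| ≤ δ n := fun s hs =>
      (W11.primitive_bound hΔ'int hs).trans (hδ2 n)
    have hDcont : ContinuousOn (fun s => x n s - x₀ s) (Icc a b) := (hcx n).sub hcx₀
    have hA : ∀ s ∈ Icc a b,
        |x n a - x₀ a| ≤ |x n s - x₀ s| + ∫ u in Icc a b, |x' n u - x₀' u| := by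
      intro s hs
      have h1 := hΔrep s hs
      have h2 := W11.primitive_bound hΔ'int hs
      have h3 : |x n a - x₀ a|
          ≤ |x n s - x₀ s| + |∫ u in a..s, (x' n u - x₀' u)| := by
        rw [show x n a - x₀ a = (x n s - x₀ s) - ∫ u in a..s, (x' n u - x₀' u) by linarith]
        exact abs_sub _ _
      linarith
    have hconst : IntegrableOn (fun _ : ℝ => |x n a - x₀ a|) (Icc a b) :=
      integrableOn_const hvolfin.ne
    have hconst2 : IntegrableOn (fun _ : ℝ => ∫ u in Icc a b, |x' n u - x₀' u|) (Icc a b) :=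
      integrableOn_const hvolfin.ne
    have hg : IntegrableOn
        (fun s => |x n s - x₀ s| + ∫ u in Icc a b, |x' n u - x₀' u|) (Icc a b) :=
      (hDcont.abs.integrableOn_compact isCompact_Icc).add hconst2
    have h5 := setIntegral_mono_on hconst hg measurableSet_Icc hA
    rw [setIntegral_const, smul_eq_mul, measureReal_def, hvol,
      integral_add (hDcont.abs.integrableOn_compact isCompact_Icc) hconst2,
      setIntegral_const, smul_eq_mul, measureReal_def, hvol] at h5
    have hIa2 : |x n a - x₀ a| ≤ (1/(b-a)) * δ n + δ n := by
      have h6 : (∫ s in Icc a b, |x n s - x₀ s|) ≤ δ n := hδ1 n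
      have h7 : (∫ u in Icc a b, |x' n u - x₀' u|) ≤ δ n := hδ2 n
      have h8 : (b - a) * |x n a - x₀ a| ≤ δ n + (b - a) * δ n := by nlinarith
      have h9 : (b - a) * |x n a - x₀ a| = (b-a) * |x n a - x₀ a| := rfl
      calc |x n a - x₀ a| = ((b - a) * |x n a - x₀ a|) / (b - a) := by field_simp
        _ ≤ (δ n + (b - a) * δ n) / (b - a) := by gcongr
        _ = (1/(b-a)) * δ n + δ n := by field_simp
    calc |x n t - x₀ t| ≤ |x n a - x₀ a| + |∫ u in a..t, (x' n u - x₀' u)| := by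
          rw [hΔrep t ht]; exact abs_add_le _ _
      _ ≤ ((1/(b-a)) * δ n + δ n) + δ n := add_le_add hIa2 (hD'bound t ht)
      _ = C * δ n := by rw [hC]; ring
  -- the indicator-difference error terms
  set e : ℕ → ℝ → ℝ := fun n s =>
    |(if 0 < x n s - ω s then (1:ℝ) else 0) - (if 0 < x₀ s - ω s then (1:ℝ) else 0)|
      * |x₀' s - ω' s| with he
  have hindabs : ∀ (p q : Prop) (_ : Decidable p) (_ : Decidable q),
      |(if p then (1:ℝ) else 0) - (if q then (1:ℝ) else 0)| ≤ 1 := by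
    intro p q _ _
    split <;> split <;> norm_num
  have hemeas : ∀ n, AEStronglyMeasurable (e n) (volume.restrict (Icc a b)) := by
    intro n
    have m1 : AEMeasurable (fun s => (if 0 < x n s - ω s then (1:ℝ) else 0))
        (volume.restrict (Icc a b)) :=
      measurable_ind_lt.comp_aemeasurable (((hcx n).sub hcω).aemeasurable measurableSet_Icc)
    have m2 : AEMeasurable (fun s => (if 0 < x₀ s - ω s then (1:ℝ) else 0))
        (volume.restrict (Icc a b)) :=
      measurable_ind_lt.comp_aemeasurable ((hcx₀.sub hcω).aemeasurable measurableSet_Icc)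
    exact ((continuous_abs.measurable.comp_aemeasurable (m1.sub m2)).mul
      (continuous_abs.measurable.comp_aemeasurable hΔ₀'int.aemeasurable)).aestronglyMeasurable
  have heint : ∀ n, IntegrableOn (e n) (Icc a b) := by
    intro n
    refine Integrable.mono' hΔ₀'int.abs (hemeas n) ?_
    filter_upwards with s
    rw [he]
    simp only [Real.norm_eq_abs, abs_abs, abs_mul]
    calc |(if 0 < x n s - ω s then (1:ℝ) else 0) - (if 0 < x₀ s - ω s then (1:ℝ) else 0)|
          * |x₀' s - ω' s| ≤ 1 * |x₀' s - ω' s| :=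
          mul_le_mul_of_nonneg_right (hindabs _ _ _ _) (abs_nonneg _)
      _ = |x₀' s - ω' s| := one_mul _
  -- e n → 0 in L¹
  have htendE : Tendsto (fun n => ∫ s in Icc a b, e n s) atTop (𝓝 0) := by
    have h0 : (0:ℝ) = ∫ s in Icc a b, (0:ℝ) := by simp
    rw [h0]
    refine tendsto_integral_of_dominated_convergence (fun s => |x₀' s - ω' s|)
      hemeas hΔ₀'int.abs ?_ ?_
    · intro n
      filter_upwards with s
      rw [he]
      simp only [Real.norm_eq_abs, abs_abs, abs_mul]
      calc |(if 0 < x n s - ω s then (1:ℝ) else 0) - (if 0 < x₀ s - ω s then (1:ℝ) else 0)|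
            * |x₀' s - ω' s| ≤ 1 * |x₀' s - ω' s| :=
            mul_le_mul_of_nonneg_right (hindabs _ _ _ _) (abs_nonneg _)
        _ = |x₀' s - ω' s| := one_mul _
    · filter_upwards [ae_restrict_mem measurableSet_Icc,
        W11.levelset hΔ₀'int hΔ₀rep] with s hsmem hlevel
      by_cases hz : x₀ s - ω s = 0
      · have hz' : x₀' s - ω' s = 0 := hlevel hz
        have : ∀ n, e n s = 0 := by
          intro n
          rw [he]
          simp only
          rw [hz', abs_zero, mul_zero]
        rw [funext this]
        exact tendsto_const_nhds
      · have hεpos : 0 < |x₀ s - ω s| := abs_pos.2 hz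
        have hCδ : Tendsto (fun n => C * δ n) atTop (𝓝 0) := by
          have := hconv.const_mul C
          simpa using this
        refine tendsto_const_nhds.congr' ?_
        filter_upwards [hCδ.eventually (gt_mem_nhds hεpos)] with n hn
        have hcl : |x n s - x₀ s| < |x₀ s - ω s| := (hsup n s hsmem).trans_lt hn
        have hind : (if 0 < x n s - ω s then (1:ℝ) else 0)
            = (if 0 < x₀ s - ω s then (1:ℝ) else 0) := by
          rcases lt_trichotomy (x₀ s - ω s) 0 with hlt | heq | hgt
          · rw [if_neg (not_lt.2 hlt.le), if_neg]
            rw [abs_of_nonpos hlt.le] at hcl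
            rw [not_lt]
            have h12 := (abs_lt.1 hcl).2
            linarith
          · exact absurd heq hz
          · rw [if_pos hgt, if_pos]
            rw [abs_of_pos hgt] at hcl
            have h11 := (abs_lt.1 hcl).1
            linarith
        rw [he]
        simp only
        rw [hind, sub_self, abs_zero, zero_mul]
  -- first term bound
  have hbound1 : ∀ n, (∫ t in Icc a b, |max (ω t) (x n t) - max (ω t) (x₀ t)|) ≤ δ n := by
    intro n
    refine le_trans ?_ (hδ1 n)
    have hcmaxn : ContinuousOn (fun t => max (ω t) (x n t)) (Icc a b) :=
      fun t ht => ((hcω t ht).max ((hcx n) t ht) : ContinuousWithinAt _ _ t)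
    have hcmax0 : ContinuousOn (fun t => max (ω t) (x₀ t)) (Icc a b) :=
      fun t ht => ((hcω t ht).max (hcx₀ t ht) : ContinuousWithinAt _ _ t)
    refine setIntegral_mono_on
      (((hcmaxn.sub hcmax0)).abs.integrableOn_compact isCompact_Icc)
      ((((hcx n).sub hcx₀).abs).integrableOn_compact isCompact_Icc) measurableSet_Icc ?_
    intro t _
    rw [max_comm (ω t) (x n t), max_comm (ω t) (x₀ t)]
    exact abs_max_sub_max_le_abs _ _ _
  -- second term bound
  have hbound2 : ∀ n, (∫ t in Icc a b,
      |(ω' t + (if 0 < x n t - ω t then (1:ℝ) else 0) * (x' n t - ω' t))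
        - (ω' t + (if 0 < x₀ t - ω t then (1:ℝ) else 0) * (x₀' t - ω' t))|)
      ≤ δ n + ∫ s in Icc a b, e n s := by
    intro n
    have hInt1 : IntegrableOn (fun t => |x' n t - x₀' t| + e n t) (Icc a b) :=
      ((hx n).1.sub hx₀.1).abs.add (heint n)
    have hIntL : IntegrableOn (fun t =>
        |(ω' t + (if 0 < x n t - ω t then (1:ℝ) else 0) * (x' n t - ω' t))
          - (ω' t + (if 0 < x₀ t - ω t then (1:ℝ) else 0) * (x₀' t - ω' t))|) (Icc a b) :=
      ((hWn n).1.sub hW0.1).abs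
    have hstep := setIntegral_mono_on hIntL hInt1 measurableSet_Icc ?_
    · calc _ ≤ ∫ t in Icc a b, (|x' n t - x₀' t| + e n t) := hstep
        _ = (∫ t in Icc a b, |x' n t - x₀' t|) + ∫ s in Icc a b, e n s :=
          integral_add ((hx n).1.sub hx₀.1).abs (heint n)
        _ ≤ δ n + ∫ s in Icc a b, e n s := by
            have := hδ2 n
            linarith
    · intro t _
      have e2 : (ω' t + (if 0 < x n t - ω t then (1:ℝ) else 0) * (x' n t - ω' t))
          - (ω' t + (if 0 < x₀ t - ω t then (1:ℝ) else 0) * (x₀' t - ω' t))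
          = (if 0 < x n t - ω t then (1:ℝ) else 0) * (x' n t - x₀' t)
            + ((if 0 < x n t - ω t then (1:ℝ) else 0)
              - (if 0 < x₀ t - ω t then (1:ℝ) else 0)) * (x₀' t - ω' t) := by ring
      rw [e2]
      calc |(if 0 < x n t - ω t then (1:ℝ) else 0) * (x' n t - x₀' t)
            + ((if 0 < x n t - ω t then (1:ℝ) else 0)
              - (if 0 < x₀ t - ω t then (1:ℝ) else 0)) * (x₀' t - ω' t)|
          ≤ |(if 0 < x n t - ω t then (1:ℝ) else 0) * (x' n t - x₀' t)|
            + |((if 0 < x n t - ω t then (1:ℝ) else 0)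
              - (if 0 < x₀ t - ω t then (1:ℝ) else 0)) * (x₀' t - ω' t)| := abs_add_le _ _
        _ ≤ |x' n t - x₀' t| + e n t := by
            refine add_le_add ?_ ?_
            · rw [abs_mul]
              calc |if 0 < x n t - ω t then (1:ℝ) else 0| * |x' n t - x₀' t|
                  ≤ 1 * |x' n t - x₀' t| :=
                    mul_le_mul_of_nonneg_right (by split <;> norm_num) (abs_nonneg _)
                _ = |x' n t - x₀' t| := one_mul _
            · rw [he, abs_mul]
  -- conclusion
  refine squeeze_zero (fun n => ?_) (fun n => ?_) ?_ (g := fun n => δ n + (δ n + ∫ s in Icc a b, e n s))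
  · exact add_nonneg (setIntegral_nonneg measurableSet_Icc fun t _ => abs_nonneg _)
      (setIntegral_nonneg measurableSet_Icc fun t _ => abs_nonneg _)
  · have h1 := hbound1 n
    have h2 := hbound2 n
    beta_reduce
    linarith
  · have := hconv.add (hconv.add htendE)
    simpa using this
end mainthm
end

section
/- Let Φ : ℝ → ℝ be a strictly increasing homeomorphism, ψ : (0,∞) → (0,∞) measurable with 1/ψ ∈ L¹_loc(0,∞) and ∫^∞ ds/ψ(s) = ∞, l ∈ L¹([a,b]) nonnegative, μ ∈ L^q([a,b]) nonnegative with 1 < q ≤ ∞, and M > 0. Let 0 < Φ(N) < Φ(L) with ∫_{Φ(N)}^{Φ(L)} ds/ψ(s) > ‖l‖_{L¹} + ‖μ‖_{L^q}(2M)^{(q−1)/q}. Suppose u ∈ W^{1,1}([t₁,t₂]) ⊆ W^{1,1}([a,b]) satisfies ‖u‖_{L^∞} ≤ M, u' > 0 a.e. on (t₁,t₂), v := Φ ∘ K_u is absolutely continuous on [t₁,t₂] with v(t₁) = Φ(N), v(t₂) = Φ(L), Φ(N) ≤ v(t) on (t₁,t₂), and |v'(t)| ≤ ψ(v(t))·(l(t)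 + μ(t)(u'(t))^{(q−1)/q}) a.e. Then a contradiction follows; hence no such u exists. -/
open MeasureTheory Set
open scoped ENNReal

open Filter
open scoped NNReal Topology

/-- Change of variables for a continuous bounded integrand and a `W^{1,1}` primitive. -/
lemma subst_cont (t₁ t₂ c : ℝ) (ht : t₁ ≤ t₂) (w' : ℝ → ℝ)
    (hw' : Integrable w' volume) (g : ℝ → ℝ) (hg : Continuous g)
    (m : ℝ) (hm : ∀ x, |g x| ≤ m) :
    ∫ t in t₁..t₂, g (c + ∫ s in t₁..t, w' s) * w' t
      = ∫ s in c..(c + ∫ s in t₁..t₂, w' s), g s := by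
  have hm0 : 0 ≤ m := le_trans (abs_nonneg _) (hm 0)
  -- choose continuous approximations of w'
  have hex : ∀ n : ℕ, ∃ φ : ℝ → ℝ, HasCompactSupport φ ∧
      (∫ x, ‖w' x - φ x‖) ≤ ((n : ℝ) + 1)⁻¹ ∧ Continuous φ ∧ Integrable φ volume := by
    intro n
    exact hw'.exists_hasCompactSupport_integral_sub_le (by positivity)
  choose φ hφc hφd hφcont hφint using hex
  set V : ℝ → ℝ := fun t => c + ∫ s in t₁..t, w' s with hV
  set vs : ℕ → ℝ → ℝ := fun n t => c + ∫ s in t₁..t, φ n s with hvs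
  have hsubint : ∀ n, Integrable (fun x => ‖φ n x - w' x‖) volume :=
    fun n => ((hφint n).sub hw').norm
  have hdiff : ∀ n t, |vs n t - V t| ≤ ((n : ℝ) + 1)⁻¹ := by
    intro n t
    have h1 : vs n t - V t = ∫ s in t₁..t, (φ n s - w' s) := by
      rw [intervalIntegral.integral_sub ((hφint n).intervalIntegrable)
        (hw'.intervalIntegrable)]
      simp [hvs, hV]
    have h2 : ‖∫ s in t₁..t, (φ n s - w' s)‖ ≤ ∫ s in Set.uIoc t₁ t, ‖φ n s - w' s‖ :=
      intervalIntegral.norm_integral_le_integral_norm_uIoc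
    have h3 : ∫ s in Set.uIoc t₁ t, ‖φ n s - w' s‖ ≤ ∫ x, ‖φ n x - w' x‖ :=
      setIntegral_le_integral (hsubint n) (Eventually.of_forall fun x => norm_nonneg _)
    have h4 : (∫ x, ‖φ n x - w' x‖) = ∫ x, ‖w' x - φ n x‖ := by
      simp_rw [norm_sub_rev]
    calc |vs n t - V t| = ‖∫ s in t₁..t, (φ n s - w' s)‖ := by rw [h1]; rfl
      _ ≤ ∫ s in Set.uIoc t₁ t, ‖φ n s - w' s‖ := h2
      _ ≤ ∫ x, ‖φ n x - w' x‖ := h3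
      _ ≤ ((n : ℝ) + 1)⁻¹ := by rw [h4]; exact hφd n
  have htend : ∀ t, Tendsto (fun n => vs n t) atTop (𝓝 (V t)) := by
    intro t
    have h0 : Tendsto (fun n : ℕ => ((n : ℝ) + 1)⁻¹) atTop (𝓝 0) :=
      tendsto_one_div_add_atTop_nhds_zero_nat.congr (by intro n; rw [one_div])
    have : Tendsto (fun n => vs n t - V t) atTop (𝓝 0) :=
      squeeze_zero_norm (fun n => hdiff n t) h0
    simpa using this.add_const (V t)
  have hvscont : ∀ n, Continuous (vs n) := fun n =>
    continuous_const.add (intervalIntegral.continuous_primitive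
      (fun a b => (hφcont n).intervalIntegrable a b) t₁)
  have hVcont : Continuous V :=
    continuous_const.add (intervalIntegral.continuous_primitive
      (fun a b => hw'.intervalIntegrable) t₁)
  -- substitution for each approximation
  have hsub : ∀ n, ∫ t in t₁..t₂, g (vs n t) * φ n t
      = ∫ s in c..(vs n t₂), g s := by
    intro n
    have hd : ∀ x ∈ uIcc t₁ t₂, HasDerivAt (vs n) (φ n x) x := by
      intro x _
      have : HasDerivAt (fun u => ∫ s in t₁..u, φ n s) (φ n x) x :=
        intervalIntegral.integral_hasDerivAt_right ((hφcont n).intervalIntegrable t₁ x)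
          ⟨univ, univ_mem, ((hφcont n).aestronglyMeasurable).restrict⟩
          (hφcont n).continuousAt
      exact this.const_add c
    have := intervalIntegral.integral_comp_mul_deriv hd ((hφcont n).continuousOn) hg
    simpa [Function.comp, hvs] using this
  -- limit of left-hand sides
  have hBint : ∀ n, Integrable (fun t => g (vs n t) * w' t) (volume.restrict (Ioc t₁ t₂)) := by
    intro n
    exact (hw'.restrict.bdd_mul (hg.comp (hvscont n)).aestronglyMeasurable.restrict
      (Eventually.of_forall fun x => (Real.norm_eq_abs _).le.trans_eq' (congrArg _ rfl) |>.trans (hm _)))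
  have hL1 : Tendsto (fun n => ∫ t in Ioc t₁ t₂, g (vs n t) * w' t) atTop
      (𝓝 (∫ t in Ioc t₁ t₂, g (V t) * w' t)) := by
    apply tendsto_integral_of_dominated_convergence (fun t => m * |w' t|)
    · exact fun n => (hBint n).aestronglyMeasurable
    · exact (hw'.norm.const_mul m).restrict
    · intro n
      refine Eventually.of_forall fun t => ?_
      rw [Real.norm_eq_abs, abs_mul]
      exact mul_le_mul_of_nonneg_right (hm _) (abs_nonneg _)
    · refine Eventually.of_forall fun t => ?_
      exact (((hg.tendsto (V t)).comp (htend t)).mul_const (w' t))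
  have hL2 : Tendsto (fun n => ∫ t in Ioc t₁ t₂, g (vs n t) * φ n t) atTop
      (𝓝 (∫ t in Ioc t₁ t₂, g (V t) * w' t)) := by
    have hdiff2 : ∀ n, |(∫ t in Ioc t₁ t₂, g (vs n t) * φ n t)
        - ∫ t in Ioc t₁ t₂, g (vs n t) * w' t| ≤ m * ((n : ℝ) + 1)⁻¹ := by
      intro n
      have hAint : Integrable (fun t => g (vs n t) * φ n t)
          (volume.restrict (Ioc t₁ t₂)) :=
        ((hφint n).restrict.bdd_mul (hg.comp (hvscont n)).aestronglyMeasurable.restrict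
          (Eventually.of_forall fun x => (Real.norm_eq_abs _).le.trans (hm _)))
      rw [← integral_sub hAint (hBint n)]
      have h1 : |∫ t in Ioc t₁ t₂, (g (vs n t) * φ n t - g (vs n t) * w' t)|
          ≤ ∫ t in Ioc t₁ t₂, ‖g (vs n t) * φ n t - g (vs n t) * w' t‖ := by
        rw [← Real.norm_eq_abs]; exact norm_integral_le_integral_norm _
      refine h1.trans ?_
      have h2 : ∫ t in Ioc t₁ t₂, ‖g (vs n t) * φ n t - g (vs n t) * w' t‖
          ≤ ∫ t in Ioc t₁ t₂, m * ‖φ n t - w' t‖ := by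
        apply integral_mono (hAint.sub (hBint n)).norm
          (((hsubint n).const_mul m).restrict)
        intro t
        simp only [Pi.sub_apply, ← mul_sub, Real.norm_eq_abs, abs_mul]
        exact mul_le_mul_of_nonneg_right (hm _) (abs_nonneg _)
      refine h2.trans ?_
      rw [integral_const_mul]
      refine mul_le_mul_of_nonneg_left ?_ hm0
      refine le_trans (setIntegral_le_integral (hsubint n)
        (Eventually.of_forall fun x => norm_nonneg _)) ?_
      calc (∫ x, ‖φ n x - w' x‖) = ∫ x, ‖w' x - φ n x‖ := by simp_rw [norm_sub_rev]
        _ ≤ ((n : ℝ) + 1)⁻¹ := hφd n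
    have h0 : Tendsto (fun n : ℕ => m * ((n : ℝ) + 1)⁻¹) atTop (𝓝 0) := by
      have : Tendsto (fun n : ℕ => ((n : ℝ) + 1)⁻¹) atTop (𝓝 0) :=
        tendsto_one_div_add_atTop_nhds_zero_nat.congr (by intro n; rw [one_div])
      simpa using this.const_mul m
    have hz : Tendsto (fun n => (∫ t in Ioc t₁ t₂, g (vs n t) * φ n t)
        - ∫ t in Ioc t₁ t₂, g (vs n t) * w' t) atTop (𝓝 0) :=
      squeeze_zero_norm (fun n => by rw [Real.norm_eq_abs]; exact hdiff2 n) h0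
    have := hz.add hL1
    simpa using this
  -- limit of right-hand sides
  have hL3 : Tendsto (fun n => ∫ s in c..(vs n t₂), g s) atTop
      (𝓝 (∫ s in c..(V t₂), g s)) := by
    have hFcont : Continuous fun x => ∫ s in c..x, g s :=
      intervalIntegral.continuous_primitive (fun a b => hg.intervalIntegrable a b) c
    exact (hFcont.tendsto (V t₂)).comp (htend t₂)
  have hEq : ∀ n, ∫ t in Ioc t₁ t₂, g (vs n t) * φ n t = ∫ s in c..(vs n t₂), g s := by
    intro n
    rw [← intervalIntegral.integral_of_le ht]
    exact hsub n
  have := tendsto_nhds_unique (hL2.congr fun n => hEq n) hL3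
  rw [intervalIntegral.integral_of_le ht]
  exact this

/-- A nonnegative bounded upper semicontinuous function on `ℝ` is the pointwise limit
of a sequence of continuous functions with the same bounds, from above. -/
lemma usc_approx (g : ℝ → ℝ) (hg : UpperSemicontinuous g) (m : ℝ)
    (hg0 : ∀ x, 0 ≤ g x) (hgm : ∀ x, g x ≤ m) :
    ∃ G : ℕ → ℝ → ℝ, (∀ n, Continuous (G n)) ∧ (∀ n x, 0 ≤ G n x) ∧ (∀ n x, G n x ≤ m)
      ∧ (∀ x, Tendsto (fun n => G n x) atTop (𝓝 (g x))) := by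
  set G : ℕ → ℝ → ℝ := fun n x => sSup (Set.range fun y => g y - ((n : ℝ) + 1) * |x - y|)
    with hG
  have hne : ∀ (n : ℕ) (x : ℝ), (Set.range fun y => g y - ((n : ℝ) + 1) * |x - y|).Nonempty :=
    fun n x => ⟨_, ⟨x, rfl⟩⟩
  have hbdd : ∀ (n : ℕ) (x : ℝ), BddAbove (Set.range fun y => g y - ((n : ℝ) + 1) * |x - y|) := by
    intro n x
    refine ⟨m, ?_⟩
    rintro _ ⟨y, rfl⟩
    show g y - ((n : ℝ) + 1) * |x - y| ≤ m
    have h1 : 0 ≤ ((n : ℝ) + 1) * |x - y| := by positivity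
    have := hgm y; linarith
  have hle : ∀ n x, g x ≤ G n x := by
    intro n x
    have := le_csSup (hbdd n x) ⟨x, rfl⟩
    simpa using this
  have hub : ∀ n x, G n x ≤ m := by
    intro n x
    refine csSup_le (hne n x) ?_
    rintro _ ⟨y, rfl⟩
    show g y - ((n : ℝ) + 1) * |x - y| ≤ m
    have h1 : 0 ≤ ((n : ℝ) + 1) * |x - y| := by positivity
    have := hgm y; linarith
  have hlip : ∀ n x x', G n x ≤ G n x' + ((n : ℝ) + 1) * |x - x'| := by
    intro n x x'
    refine csSup_le (hne n x) ?_
    rintro _ ⟨y, rfl⟩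
    show g y - ((n : ℝ) + 1) * |x - y| ≤ G n x' + ((n : ℝ) + 1) * |x - x'|
    have h1 : g y - ((n : ℝ) + 1) * |x' - y| ≤ G n x' := le_csSup (hbdd n x') ⟨y, rfl⟩
    have h2 : |x' - y| ≤ |x' - x| + |x - y| := abs_sub_le _ _ _
    have h3 : ((n : ℝ) + 1) * |x' - y| ≤ ((n : ℝ) + 1) * (|x' - x| + |x - y|) := by
      apply mul_le_mul_of_nonneg_left h2 (by positivity)
    have h4 : |x' - x| = |x - x'| := abs_sub_comm _ _
    nlinarith [abs_nonneg (x - y)]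
  refine ⟨G, ?_, fun n x => le_trans (hg0 x) (hle n x), hub, ?_⟩
  · intro n
    have : LipschitzWith ((n : ℝ≥0) + 1) (G n) := by
      apply LipschitzWith.of_dist_le_mul
      intro x x'
      have hK : (((n : ℝ≥0) + 1 : ℝ≥0) : ℝ) = (n : ℝ) + 1 := by push_cast; ring
      rw [Real.dist_eq, Real.dist_eq, hK, abs_sub_le_iff]
      constructor
      · have := hlip n x x'; linarith
      · have := hlip n x' x; rw [abs_sub_comm]; linarith
    exact this.continuous
  · intro x
    rw [Metric.tendsto_atTop]
    intro ε hε
    have husc := hg x (g x + ε / 2) (by linarith)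
    rw [Metric.eventually_nhds_iff] at husc
    obtain ⟨δ, hδ, hball⟩ := husc
    refine ⟨⌈m / δ⌉₊, fun n hn => ?_⟩
    have hup : G n x ≤ g x + ε / 2 := by
      refine csSup_le (hne n x) ?_
      rintro _ ⟨y, rfl⟩
      show g y - ((n : ℝ) + 1) * |x - y| ≤ g x + ε / 2
      by_cases hy : |y - x| < δ
      · have := hball (y := y) (by rwa [Real.dist_eq])
        have h1 : 0 ≤ ((n : ℝ) + 1) * |x - y| := by positivity
        linarith
      · push_neg at hy
        have h1 : m ≤ (⌈m / δ⌉₊ : ℝ) * δ := by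
          rw [← div_le_iff₀ hδ]; exact Nat.le_ceil _
        have h2 : ((⌈m / δ⌉₊ : ℝ)) * δ ≤ ((n : ℝ) + 1) * δ := by
          apply mul_le_mul_of_nonneg_right _ hδ.le
          have : (⌈m / δ⌉₊ : ℝ) ≤ (n : ℝ) := by exact_mod_cast hn
          linarith
        have h3 : ((n : ℝ) + 1) * δ ≤ ((n : ℝ) + 1) * |x - y| := by
          apply mul_le_mul_of_nonneg_left _ (by positivity)
          rwa [abs_sub_comm]
        have := hgm y
        have := hg0 x
        linarith
    rw [Real.dist_eq, abs_of_nonneg (by linarith [hle n x])]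
    linarith [hle n x]

/-- Change of variables for a bounded nonnegative upper semicontinuous integrand
and a `W^{1,1}` primitive. -/
lemma subst_usc (t₁ t₂ c : ℝ) (ht : t₁ ≤ t₂) (w' : ℝ → ℝ)
    (hw' : Integrable w' volume) (g : ℝ → ℝ) (hg : UpperSemicontinuous g)
    (m : ℝ) (hg0 : ∀ x, 0 ≤ g x) (hgm : ∀ x, g x ≤ m)
    (hcd : c ≤ c + ∫ s in t₁..t₂, w' s) :
    ∫ t in t₁..t₂, g (c + ∫ s in t₁..t, w' s) * w' t
      = ∫ s in c..(c + ∫ s in t₁..t₂, w' s), g s := by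
  obtain ⟨G, hGc, hG0, hGm, hGt⟩ := usc_approx g hg m hg0 hgm
  set V : ℝ → ℝ := fun t => c + ∫ s in t₁..t, w' s with hV
  set d : ℝ := c + ∫ s in t₁..t₂, w' s with hd
  have hVcont : Continuous V :=
    continuous_const.add (intervalIntegral.continuous_primitive
      (fun a b => hw'.intervalIntegrable) t₁)
  have hm0 : 0 ≤ m := le_trans (hg0 0) (hgm 0)
  have hsub : ∀ n, ∫ t in Ioc t₁ t₂, G n (V t) * w' t = ∫ s in Ioc c d, G n s := by
    intro n
    rw [← intervalIntegral.integral_of_le ht, ← intervalIntegral.integral_of_le hcd]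
    exact subst_cont t₁ t₂ c ht w' hw' (G n) (hGc n) m
      (fun x => by rw [abs_of_nonneg (hG0 n x)]; exact hGm n x)
  have hL : Tendsto (fun n => ∫ t in Ioc t₁ t₂, G n (V t) * w' t) atTop
      (𝓝 (∫ t in Ioc t₁ t₂, g (V t) * w' t)) := by
    apply tendsto_integral_of_dominated_convergence (fun t => m * |w' t|)
    · intro n
      exact ((hGc n).comp hVcont).aestronglyMeasurable.restrict.mul
        hw'.aestronglyMeasurable.restrict
    · exact (hw'.norm.const_mul m).restrict
    · intro n
      refine Eventually.of_forall fun t => ?_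
      rw [Real.norm_eq_abs, abs_mul, abs_of_nonneg (hG0 n _)]
      exact mul_le_mul_of_nonneg_right (hGm n _) (abs_nonneg _)
    · exact Eventually.of_forall fun t => (hGt (V t)).mul_const (w' t)
  have hR : Tendsto (fun n => ∫ s in Ioc c d, G n s) atTop
      (𝓝 (∫ s in Ioc c d, g s)) := by
    apply tendsto_integral_of_dominated_convergence (fun _ => m)
    · exact fun n => (hGc n).aestronglyMeasurable.restrict
    · exact integrable_const m
    · intro n
      refine Eventually.of_forall fun s => ?_
      rw [Real.norm_eq_abs, abs_of_nonneg (hG0 n _)]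
      exact hGm n _
    · exact Eventually.of_forall fun s => hGt s
  have := tendsto_nhds_unique (hL.congr fun n => hsub n) hR
  rw [intervalIntegral.integral_of_le ht, intervalIntegral.integral_of_le hcd]
  exact this

/-- min of an upper semicontinuous function with a constant is upper semicontinuous. -/
lemma usc_min_const {g : ℝ → ℝ} (hg : UpperSemicontinuous g) (k : ℝ) :
    UpperSemicontinuous fun x => min (g x) k := by
  intro x y hy
  rcases le_or_gt k (g x) with h | h
  · have hk : k < y := by simpa [min_eq_right h] using hy
    exact Eventually.of_forall fun z => lt_of_le_of_lt (min_le_right _ _) hk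
  · have hx : g x < y := by simpa [min_eq_left h.le] using hy
    filter_upwards [hg x y hx] with z hz
    exact lt_of_le_of_lt (min_le_left _ _) hz





lemma holder_step (q : ℝ≥0∞) (hq : 1 < q) (ν : Measure ℝ)
    (μ u' : ℝ → ℝ) (hMμ : MemLp μ q ν) (hu'int : Integrable u' ν)
    (hu'pos : ∀ᵐ t ∂ν, 0 < u' t) (C : ℝ) (hC : 0 < C)
    (hint : ∫ t, u' t ∂ν ≤ C) :
    Integrable (fun t => μ t * u' t ^ (1 - (q.toReal)⁻¹)) ν ∧
      ∫ t, μ t * u' t ^ (1 - (q.toReal)⁻¹) ∂ν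
        ≤ (eLpNorm μ q ν).toReal * C ^ (1 - (q.toReal)⁻¹) := by
  set θ : ℝ := 1 - (q.toReal)⁻¹ with hθdef
  set w : ℝ → ℝ := fun t => u' t ^ θ with hw
  have hθpos : 0 < θ := by
    by_cases hqt : q = ∞
    · simp [hθdef, hqt]
    · have h1 : (1 : ℝ) < q.toReal := by
        rw [← ENNReal.toReal_one]
        exact ENNReal.toReal_strict_mono hqt hq
      have h2 : (q.toReal)⁻¹ < 1 := by
        rw [inv_lt_one_iff₀]; right; exact h1
      simp only [hθdef]; linarith
  set r : ℝ≥0∞ := (1 - 1/q)⁻¹ with hr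
  have h1q : 1/q ≤ 1 := by
    rw [one_div]; exact ENNReal.inv_le_one.mpr hq.le
  have hqinv : (1:ℝ≥0∞)/q < 1 := by
    rw [one_div]; exact ENNReal.inv_lt_one.mpr hq
  have hsubne0 : (1 : ℝ≥0∞) - 1/q ≠ 0 := by
    rw [Ne, tsub_eq_zero_iff_le]
    exact fun h => absurd (lt_of_lt_of_le hqinv h) (lt_irrefl _)
  have hsubnetop : (1 : ℝ≥0∞) - 1/q ≠ ∞ :=
    ne_top_of_le_ne_top ENNReal.one_ne_top tsub_le_self
  have hrne0 : r ≠ 0 := ENNReal.inv_ne_zero.mpr hsubnetop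
  have hrtop : r ≠ ∞ := ENNReal.inv_ne_top.mpr hsubne0
  have hpqr : (1:ℝ≥0∞)/1 = 1/q + 1/r := by
    rw [hr, one_div ((1 - 1/q)⁻¹), inv_inv, add_tsub_cancel_of_le h1q, div_one]
  have hrtoReal : r.toReal = θ⁻¹ := by
    rw [hr, ENNReal.toReal_inv]
    congr 1
    rw [ENNReal.toReal_sub_of_le h1q ENNReal.one_ne_top, one_div, ENNReal.toReal_inv,
      ENNReal.toReal_one]
  have h1r : 1 / r.toReal = θ := by rw [hrtoReal, one_div, inv_inv]
  have hwm : AEStronglyMeasurable w ν :=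
    (Real.continuous_rpow_const hθpos.le).comp_aestronglyMeasurable
      hu'int.aestronglyMeasurable
  have hlint : ∫⁻ t, (‖w t‖₊ : ℝ≥0∞) ^ r.toReal ∂ν = ENNReal.ofReal (∫ t, u' t ∂ν) := by
    rw [ofReal_integral_eq_lintegral_ofReal hu'int (hu'pos.mono fun t ht => ht.le)]
    apply lintegral_congr_ae
    filter_upwards [hu'pos] with t ht
    have hwnn : 0 ≤ w t := Real.rpow_nonneg ht.le θ
    calc (‖w t‖₊ : ℝ≥0∞) ^ r.toReal
        = (ENNReal.ofReal (w t)) ^ r.toReal := by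
          rw [← enorm_eq_nnnorm, ← ofReal_norm, Real.norm_of_nonneg hwnn]
      _ = ENNReal.ofReal ((w t) ^ r.toReal) :=
          ENNReal.ofReal_rpow_of_nonneg hwnn ENNReal.toReal_nonneg
      _ = ENNReal.ofReal (u' t) := by
          congr 1
          rw [hw, hrtoReal]
          rw [← Real.rpow_mul ht.le, mul_inv_cancel₀ hθpos.ne', Real.rpow_one]
  have heL : eLpNorm w r ν ≤ ENNReal.ofReal (C ^ θ) := by
    rw [eLpNorm_eq_lintegral_rpow_enorm_toReal hrne0 hrtop,
      show (∫⁻ t, ‖w t‖ₑ ^ r.toReal ∂ν) = _ from hlint, h1r]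
    calc (ENNReal.ofReal (∫ t, u' t ∂ν)) ^ θ
        ≤ (ENNReal.ofReal C) ^ θ :=
          ENNReal.rpow_le_rpow (ENNReal.ofReal_le_ofReal hint) hθpos.le
      _ = ENNReal.ofReal (C ^ θ) := ENNReal.ofReal_rpow_of_pos hC
  have hMw : MemLp w r ν := by
    refine ⟨hwm, ?_⟩
    rw [eLpNorm_eq_lintegral_rpow_enorm_toReal hrne0 hrtop,
      show (∫⁻ t, ‖w t‖ₑ ^ r.toReal ∂ν) = _ from hlint, h1r]
    exact ENNReal.rpow_lt_top_of_nonneg hθpos.le ENNReal.ofReal_ne_top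
  have hint_mul : Integrable (fun t => μ t * w t) ν := by
    have h := hMw.smul hMμ (hpqr := ⟨by simpa only [one_div] using hpqr.symm⟩)
    rw [memLp_one_iff_integrable] at h
    exact h
  refine ⟨hint_mul, ?_⟩
  calc ∫ t, μ t * w t ∂ν ≤ |∫ t, μ t * w t ∂ν| := le_abs_self _
    _ = ‖∫ t, μ t * w t ∂ν‖ := (Real.norm_eq_abs _).symm
    _ ≤ ∫ t, ‖μ t * w t‖ ∂ν := norm_integral_le_integral_norm _
    _ = (∫⁻ t, (‖μ t * w t‖₊ : ℝ≥0∞) ∂ν).toReal :=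
        integral_norm_eq_lintegral_enorm hint_mul.aestronglyMeasurable
    _ = (eLpNorm (μ • w) 1 ν).toReal := by rw [eLpNorm_one_eq_lintegral_enorm]; rfl
    _ ≤ ((eLpNorm μ q ν) * ENNReal.ofReal (C ^ θ)).toReal := by
        apply ENNReal.toReal_mono
          (ENNReal.mul_ne_top hMμ.eLpNorm_ne_top ENNReal.ofReal_ne_top)
        exact le_trans (eLpNorm_smul_le_mul_eLpNorm hwm hMμ.aestronglyMeasurable
            (hpqr := ⟨by simpa only [one_div] using hpqr.symm⟩))
          (mul_le_mul' le_rfl heL)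
    _ = (eLpNorm μ q ν).toReal * C ^ θ := by
        rw [ENNReal.toReal_mul, ENNReal.toReal_ofReal (Real.rpow_nonneg hC.le θ)]

/-- Nagumo-type a priori bound: under the stated hypotheses (choice of `L` via the
divergent integral of `1/ψ`, Nagumo growth of `v' = (Φ∘K_u)'`), no absolutely
continuous `v` can climb from `Φ(N)` to `Φ(L)` on `[t₁,t₂]`; a contradiction follows. -/
theorem nagumo_contradiction (a b t₁ t₂ M N L : ℝ) (hab : a < b)
    (ht₁ : a ≤ t₁) (ht : t₁ < t₂) (ht₂ : t₂ ≤ b) (hM : 0 < M)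
    (Φ : ℝ → ℝ) (hΦmono : StrictMono Φ) (hΦcont : Continuous Φ)
    (hΦbij : Function.Bijective Φ)
    (ψ : ℝ → ℝ) (hψmeas : Measurable ψ) (hψpos : ∀ s > (0:ℝ), 0 < ψ s)
    (hψloc : ∀ c d : ℝ, 0 < c → c ≤ d → IntegrableOn (fun s => 1 / ψ s) (Icc c d))
    (hψdiv : ∀ c > (0:ℝ), ¬ IntegrableOn (fun s => 1 / ψ s) (Ioi c))
    (l : ℝ → ℝ) (hl : IntegrableOn l (Icc a b))
    (hl0 : ∀ t ∈ Icc a b, 0 ≤ l t)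
    (q : ℝ≥0∞) (hq : 1 < q)
    (μ : ℝ → ℝ) (hμ : MemLp μ q (volume.restrict (Icc a b)))
    (hμ0 : ∀ t ∈ Icc a b, 0 ≤ μ t)
    (hN : 0 < Φ N) (hNL : Φ N < Φ L)
    (hL : (∫ t in Icc a b, l t) +
        (eLpNorm μ q (volume.restrict (Icc a b))).toReal *
          (2 * M) ^ (1 - (q.toReal)⁻¹)
      < ∫ s in (Φ N)..(Φ L), 1 / ψ s)
    (u u' : ℝ → ℝ) (hu : IsW11On t₁ t₂ u u')
    (hub : ∀ t ∈ Icc t₁ t₂, |u t| ≤ M)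
    (hu'pos : ∀ᵐ t ∂(volume.restrict (Ioo t₁ t₂)), 0 < u' t)
    (v v' : ℝ → ℝ) (hv : IsW11On t₁ t₂ v v')
    (hv₁ : v t₁ = Φ N) (hv₂ : v t₂ = Φ L)
    (hvge : ∀ t ∈ Icc t₁ t₂, Φ N ≤ v t)
    (hNag : ∀ᵐ t ∂(volume.restrict (Ioo t₁ t₂)),
        |v' t| ≤ ψ (v t) * (l t + μ t * (u' t) ^ (1 - (q.toReal)⁻¹))) :
    False := by
  set θ : ℝ := 1 - (q.toReal)⁻¹ with hθdef
  set A : ℝ := (∫ t in Icc a b, l t) +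
      (eLpNorm μ q (volume.restrict (Icc a b))).toReal * (2 * M) ^ θ with hA
  set I : ℝ := ∫ s in (Φ N)..(Φ L), 1 / ψ s with hI
  set ε : ℝ := (I - A) / 3 with hε
  have hεpos : 0 < ε := by rw [hε]; linarith [hL]
  have hIccsub : Icc t₁ t₂ ⊆ Icc a b := Icc_subset_Icc ht₁ ht₂
  have hIocsub : Ioc t₁ t₂ ⊆ Icc a b := fun x hx => hIccsub (Ioc_subset_Icc_self hx)
  -- the function 1/ψ truncated to [Φ N, Φ L]
  have hψint : IntegrableOn (fun s => 1 / ψ s) (Icc (Φ N) (Φ L)) := hψloc _ _ hN hNL.le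
  have hψnn : ∀ s ∈ Icc (Φ N) (Φ L), 0 ≤ 1 / ψ s := fun s hs =>
    le_of_lt (one_div_pos.mpr (hψpos s (lt_of_lt_of_le hN hs.1)))
  set f₀ : ℝ → ℝ≥0 :=
    fun s => Real.toNNReal (Set.indicator (Icc (Φ N) (Φ L)) (fun s => 1 / ψ s) s) with hf₀
  have hcoe : ∀ x, (f₀ x : ℝ) = Set.indicator (Icc (Φ N) (Φ L)) (fun s => 1 / ψ s) x := by
    intro x
    by_cases hx : x ∈ Icc (Φ N) (Φ L)
    · simp only [hf₀]
      rw [indicator_of_mem hx]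
      exact Real.coe_toNNReal _ (hψnn x hx)
    · simp [hf₀, indicator_of_notMem hx]
  have hfuncoe : (fun x => (f₀ x : ℝ))
      = Set.indicator (Icc (Φ N) (Φ L)) (fun s => 1 / ψ s) := funext hcoe
  have hf₀int : Integrable (fun x => (f₀ x : ℝ)) volume := by
    rw [hfuncoe]
    exact (integrable_indicator_iff measurableSet_Icc).mpr hψint
  have hf₀I : ∫ x, (f₀ x : ℝ) = I := by
    rw [hfuncoe, integral_indicator measurableSet_Icc, hI,
      intervalIntegral.integral_of_le hNL.le,
      Measure.restrict_congr_set Ioc_ae_eq_Icc]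
  -- Vitali–Carathéodory
  obtain ⟨g, hgle, hgusc, hgint, hgI⟩ :=
    exists_upperSemicontinuous_le_integral_le f₀ hf₀int hεpos
  set G : ℝ → ℝ := fun x => (g x : ℝ) with hGdef
  have hGusc : UpperSemicontinuous G :=
    NNReal.continuous_coe.comp_upperSemicontinuous hgusc NNReal.coe_mono
  have hG0 : ∀ x, 0 ≤ G x := fun x => (g x).coe_nonneg
  have hGle : ∀ x, G x ≤ (f₀ x : ℝ) := fun x => NNReal.coe_le_coe.mpr (hgle x)
  -- truncation
  have htr : Tendsto (fun k : ℕ => ∫ x, min (G x) k) atTop (𝓝 (∫ x, G x)) := by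
    apply tendsto_integral_of_dominated_convergence (fun x => G x)
    · exact fun k => (hGusc.measurable.min measurable_const).aestronglyMeasurable
    · exact hgint
    · intro k
      refine Eventually.of_forall fun x => ?_
      rw [Real.norm_eq_abs, abs_of_nonneg (le_min (hG0 x) (Nat.cast_nonneg k))]
      exact min_le_left _ _
    · refine Eventually.of_forall fun x => ?_
      apply tendsto_atTop_of_eventually_const (i₀ := ⌈G x⌉₊)
      intro k hk
      exact min_eq_left (le_trans (Nat.le_ceil (G x)) (Nat.cast_le.mpr hk))
  obtain ⟨k₀, hk₀⟩ := (htr.eventually (eventually_gt_nhds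
    (show (∫ x, G x) - ε < ∫ x, G x by linarith))).exists
  set g₀ : ℝ → ℝ := fun x => min (G x) k₀ with hg₀def
  have hg₀usc : UpperSemicontinuous g₀ := usc_min_const hGusc _
  have hg₀0 : ∀ x, 0 ≤ g₀ x := fun x => le_min (hG0 x) (Nat.cast_nonneg k₀)
  have hg₀m : ∀ x, g₀ x ≤ (k₀ : ℝ) := fun x => min_le_right _ _
  have hg₀le : ∀ x, g₀ x ≤ (f₀ x : ℝ) := fun x => le_trans (min_le_left _ _) (hGle x)
  have hkey : ∀ x, 0 < x → g₀ x * ψ x ≤ 1 := by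
    intro x hx
    have h2 : 0 < ψ x := hψpos x hx
    by_cases hmem : x ∈ Icc (Φ N) (Φ L)
    · have h1 : g₀ x ≤ 1 / ψ x := (hg₀le x).trans_eq (by rw [hcoe, indicator_of_mem hmem])
      calc g₀ x * ψ x ≤ (1 / ψ x) * ψ x := mul_le_mul_of_nonneg_right h1 h2.le
        _ = 1 := by rw [one_div, inv_mul_cancel₀ h2.ne']
    · have h1 : g₀ x ≤ 0 := (hg₀le x).trans_eq (by rw [hcoe, indicator_of_notMem hmem])
      have h0 : g₀ x = 0 := le_antisymm h1 (hg₀0 x)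
      simp [h0]
  have hg₀zero : ∀ x, x ∉ Icc (Φ N) (Φ L) → g₀ x = 0 := fun x hx =>
    le_antisymm ((hg₀le x).trans_eq (by rw [hcoe, indicator_of_notMem hx])) (hg₀0 x)
  have hg₀int_eq : ∫ x, g₀ x = ∫ s in (Φ N)..(Φ L), g₀ s := by
    have hfun : Set.indicator (Icc (Φ N) (Φ L)) g₀ = g₀ := by
      funext x
      by_cases hx : x ∈ Icc (Φ N) (Φ L)
      · rw [indicator_of_mem hx]
      · rw [indicator_of_notMem hx, hg₀zero x hx]
    rw [intervalIntegral.integral_of_le hNL.le,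
      Measure.restrict_congr_set Ioc_ae_eq_Icc, ← integral_indicator measurableSet_Icc,
      hfun]
  have hIg0 : I - 2 * ε ≤ ∫ x, g₀ x := by
    have h1 := hgI
    rw [hf₀I] at h1
    linarith [hk₀.le]
  -- substitution setup
  set w' : ℝ → ℝ := Set.indicator (Icc t₁ t₂) v' with hw'def
  have hw'int : Integrable w' volume := (integrable_indicator_iff measurableSet_Icc).mpr hv.1
  set V : ℝ → ℝ := fun t => Φ N + ∫ s in t₁..t, w' s with hVdef
  have hVeq : ∀ t ∈ Icc t₁ t₂, V t = v t := by
    intro t htt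
    have hsub2 : uIcc t₁ t ⊆ Icc t₁ t₂ := by
      rw [uIcc_of_le htt.1]; exact Icc_subset_Icc le_rfl htt.2
    have hcongr : ∫ s in t₁..t, w' s = ∫ s in t₁..t, v' s :=
      intervalIntegral.integral_congr fun s hs => indicator_of_mem (hsub2 hs) v'
    rw [hVdef]
    simp only
    rw [hcongr, ← hv₁]
    exact (hv.2 t htt).symm
  have hVt₂ : Φ N + ∫ s in t₁..t₂, w' s = Φ L := by
    have h := hVeq t₂ (right_mem_Icc.mpr ht.le)
    rw [hv₂] at h
    exact h
  have hEQ : ∫ t in t₁..t₂, g₀ (V t) * w' t = ∫ s in (Φ N)..(Φ L), g₀ s := by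
    have h := subst_usc t₁ t₂ (Φ N) ht.le w' hw'int g₀ hg₀usc (k₀ : ℝ) hg₀0 hg₀m
      (by rw [hVt₂]; exact hNL.le)
    rw [hVt₂] at h
    exact h
  -- transfer a.e. facts from Ioo to Ioc
  have hres : volume.restrict (Ioo t₁ t₂) = volume.restrict (Ioc t₁ t₂) :=
    Measure.restrict_congr_set Ioo_ae_eq_Ioc
  rw [hres] at hu'pos hNag
  -- Hölder part
  have hu'intIoc : Integrable u' (volume.restrict (Ioc t₁ t₂)) :=
    hu.1.mono_set Ioc_subset_Icc_self
  have hu'le : ∫ t in Ioc t₁ t₂, u' t ≤ 2 * M := by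
    have h2 := hu.2 t₂ (right_mem_Icc.mpr ht.le)
    rw [intervalIntegral.integral_of_le ht.le] at h2
    have hub1 := abs_le.mp (hub t₁ (left_mem_Icc.mpr ht.le))
    have hub2 := abs_le.mp (hub t₂ (right_mem_Icc.mpr ht.le))
    linarith
  have hMμν : MemLp μ q (volume.restrict (Ioc t₁ t₂)) :=
    hμ.mono_measure (Measure.restrict_mono hIocsub le_rfl)
  obtain ⟨hμw_int, hμw_le⟩ := holder_step q hq (volume.restrict (Ioc t₁ t₂)) μ u'
    hMμν hu'intIoc hu'pos (2 * M) (by linarith) hu'le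
  have hμw_le' : ∫ t in Ioc t₁ t₂, μ t * u' t ^ θ
      ≤ (eLpNorm μ q (volume.restrict (Icc a b))).toReal * (2 * M) ^ θ := by
    refine le_trans hμw_le (mul_le_mul_of_nonneg_right ?_ (Real.rpow_nonneg (by linarith) θ))
    exact ENNReal.toReal_mono hμ.eLpNorm_ne_top
      (eLpNorm_mono_measure μ (Measure.restrict_mono hIocsub le_rfl))
  -- pointwise bound
  have hVcont : Continuous V :=
    continuous_const.add (intervalIntegral.continuous_primitive
      (fun a b => hw'int.intervalIntegrable) t₁)
  have hlhs_int : Integrable (fun t => g₀ (V t) * w' t) (volume.restrict (Ioc t₁ t₂)) := by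
    apply hw'int.restrict.bdd_mul (c := (k₀ : ℝ))
      ((hg₀usc.measurable.comp hVcont.measurable).aestronglyMeasurable)
    refine Eventually.of_forall fun x => ?_
    show ‖g₀ (V x)‖ ≤ (k₀ : ℝ)
    rw [Real.norm_eq_abs, abs_of_nonneg (hg₀0 _)]
    exact hg₀m _
  have hrhs_int : Integrable (fun t => l t + μ t * u' t ^ θ)
      (volume.restrict (Ioc t₁ t₂)) := (hl.mono_set hIocsub).add hμw_int
  have hptwise : ∀ᵐ t ∂(volume.restrict (Ioc t₁ t₂)),
      g₀ (V t) * w' t ≤ l t + μ t * u' t ^ θ := by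
    filter_upwards [hu'pos, hNag, ae_restrict_mem measurableSet_Ioc] with t htu htn htmem
    have htIcc : t ∈ Icc t₁ t₂ := Ioc_subset_Icc_self htmem
    have htab : t ∈ Icc a b := hIccsub htIcc
    have hVv : V t = v t := hVeq t htIcc
    have hw'v : w' t = v' t := indicator_of_mem htIcc v'
    have hvpos : 0 < v t := lt_of_lt_of_le hN (hvge t htIcc)
    have hR0 : 0 ≤ l t + μ t * u' t ^ θ :=
      add_nonneg (hl0 t htab) (mul_nonneg (hμ0 t htab) (Real.rpow_nonneg htu.le θ))
    calc g₀ (V t) * w' t = g₀ (v t) * v' t := by rw [hVv, hw'v]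
      _ ≤ g₀ (v t) * |v' t| := mul_le_mul_of_nonneg_left (le_abs_self _) (hg₀0 _)
      _ ≤ g₀ (v t) * (ψ (v t) * (l t + μ t * u' t ^ θ)) :=
          mul_le_mul_of_nonneg_left htn (hg₀0 _)
      _ = (g₀ (v t) * ψ (v t)) * (l t + μ t * u' t ^ θ) := (mul_assoc _ _ _).symm
      _ ≤ 1 * (l t + μ t * u' t ^ θ) :=
          mul_le_mul_of_nonneg_right (hkey _ hvpos) hR0
      _ = l t + μ t * u' t ^ θ := one_mul _
  have hmono : ∫ t in Ioc t₁ t₂, g₀ (V t) * w' t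
      ≤ ∫ t in Ioc t₁ t₂, (l t + μ t * u' t ^ θ) :=
    integral_mono_ae hlhs_int hrhs_int hptwise
  have hlpart : ∫ t in Ioc t₁ t₂, l t ≤ ∫ t in Icc a b, l t :=
    setIntegral_mono_set hl ((ae_restrict_mem measurableSet_Icc).mono hl0)
      (HasSubset.Subset.eventuallyLE hIocsub)
  have hsplit : ∫ t in Ioc t₁ t₂, (l t + μ t * u' t ^ θ)
      = (∫ t in Ioc t₁ t₂, l t) + ∫ t in Ioc t₁ t₂, μ t * u' t ^ θ :=
    integral_add (hl.mono_set hIocsub) hμw_int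
  have hfinal : ∫ s in (Φ N)..(Φ L), g₀ s ≤ A := by
    rw [← hEQ, intervalIntegral.integral_of_le ht.le]
    calc ∫ t in Ioc t₁ t₂, g₀ (V t) * w' t
        ≤ ∫ t in Ioc t₁ t₂, (l t + μ t * u' t ^ θ) := hmono
      _ = (∫ t in Ioc t₁ t₂, l t) + ∫ t in Ioc t₁ t₂, μ t * u' t ^ θ := hsplit
      _ ≤ A := by rw [hA]; exact add_le_add hlpart hμw_le'
  rw [← hg₀int_eq] at hfinal
  have : I - 2 * ε ≤ A := le_trans hIg0 hfinal
  rw [hε] at this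
  linarith [hL]
end

section
/- Let v : [t₁,t₂] → ℝ be absolutely continuous with v(t) > 0 for all t, and let ψ : (0,∞) → (0,∞) be measurable with 1/ψ locally integrable on (0,∞). If g ∈ L¹([t₁,t₂]) is nonnegative and |v'(t)| ≤ ψ(v(t)) g(t) for a.e. t, then ∫_{v(t₁)}^{v(t₂)} ds/ψ(s) ≤ ∫_{t₁}^{t₂} g(t) dt (when v(t₁) ≤ v(t₂)). -/
open MeasureTheory Set
open intervalIntegral

lemma subst_ineq_eps (t₁ t₂ : ℝ) (ht : t₁ ≤ t₂)
    (v v' : ℝ → ℝ)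
    (hv' : IntegrableOn v' (Icc t₁ t₂))
    (hvAC : ∀ t ∈ Icc t₁ t₂, v t = v t₁ + ∫ s in t₁..t, v' s)
    (L : ℝ → ℝ) (hL : Continuous L) (hL0 : ∀ y, 0 ≤ L y)
    (ε : ℝ) (hε : 0 < ε) :
    ∫ s in (v t₁)..(v t₂), L s ≤ ∫ t in t₁..t₂, (L (v t) + ε) * |v' t| := by
  have hvcont : ContinuousOn v (Icc t₁ t₂) := by
    have h1 : ContinuousOn (fun u => v t₁ + ∫ s in Ioc t₁ u, v' s) (Icc t₁ t₂) :=
      continuousOn_const.add (continuousOn_primitive hv')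
    refine ContinuousOn.congr h1 ?_
    intro u hu
    rw [hvAC u hu, intervalIntegral.integral_of_le hu.1]
  have habs : IntegrableOn (fun t => |v' t|) (Icc t₁ t₂) := hv'.abs
  have hΦint : IntegrableOn (fun t => (L (v t) + ε) * |v' t|) (Icc t₁ t₂) :=
    IntegrableOn.continuousOn_mul ((hL.comp_continuousOn hvcont).add continuousOn_const)
      habs isCompact_Icc
  have hv'ii : ∀ a b, a ∈ Icc t₁ t₂ → b ∈ Icc t₁ t₂ → a ≤ b →
      IntervalIntegrable v' volume a b := by
    intro a b ha hb hab
    rw [intervalIntegrable_iff_integrableOn_Icc_of_le hab]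
    exact hv'.mono_set (Icc_subset_Icc ha.1 hb.2)
  have hΦii : ∀ a b, a ∈ Icc t₁ t₂ → b ∈ Icc t₁ t₂ → a ≤ b →
      IntervalIntegrable (fun t => (L (v t) + ε) * |v' t|) volume a b := by
    intro a b ha hb hab
    rw [intervalIntegrable_iff_integrableOn_Icc_of_le hab]
    exact hΦint.mono_set (Icc_subset_Icc ha.1 hb.2)
  have hΦ0 : ∀ t, 0 ≤ (L (v t) + ε) * |v' t| := fun t =>
    mul_nonneg (add_nonneg (hL0 _) hε.le) (abs_nonneg _)
  set S : Set ℝ := {u | ∫ s in (v t₁)..(v u), L s ≤ ∫ t in t₁..u, (L (v t) + ε) * |v' t|}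
    with hS
  have main : Icc t₁ t₂ ⊆ S := by
    have hclosed : IsClosed (S ∩ Icc t₁ t₂) := by
      have hc : ContinuousOn
          (fun u => ((∫ s in (v t₁)..(v u), L s), ∫ t in t₁..u, (L (v t) + ε) * |v' t|))
          (Icc t₁ t₂) := by
        apply ContinuousOn.prodMk
        · have hG : Continuous (fun y => ∫ s in (v t₁)..y, L s) := by
            have hd : ∀ y : ℝ, HasStrictDerivAt (fun u => ∫ s in (v t₁)..u, L s) (L y) y :=
              fun y => intervalIntegral.integral_hasStrictDerivAt_right
                (hL.intervalIntegrable _ _) (hL.stronglyMeasurableAtFilter _ _)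
                hL.continuousAt
            exact continuous_iff_continuousAt.2 fun y => ((hd y).hasDerivAt).continuousAt
          exact hG.comp_continuousOn hvcont
        · have h1 : ContinuousOn (fun u => ∫ t in Ioc t₁ u, (L (v t) + ε) * |v' t|)
              (Icc t₁ t₂) := continuousOn_primitive hΦint
          refine ContinuousOn.congr h1 fun u hu => ?_
          exact intervalIntegral.integral_of_le hu.1
      rw [inter_comm]
      exact hc.preimage_isClosed_of_isClosed isClosed_Icc isClosed_le_prod
    apply hclosed.Icc_subset_of_forall_exists_gt
    · simp only [hS, mem_setOf_eq, intervalIntegral.integral_same]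
      simp
    · rintro x ⟨hxS, hx1, hx2⟩ y hy
      obtain ⟨r, hr, hLr⟩ : ∃ r > 0, ∀ z, |z - v x| ≤ r → |L z - L (v x)| ≤ ε / 2 := by
        obtain ⟨δ, hδ, h⟩ := Metric.continuous_iff.1 hL (v x) (ε / 2) (by positivity)
        exact ⟨δ / 2, by positivity, fun z hz => by
          have := h z (by rw [Real.dist_eq]; linarith)
          rw [Real.dist_eq] at this; exact this.le⟩
      have hvx : ContinuousWithinAt v (Icc t₁ t₂) x := hvcont x ⟨hx1, hx2.le⟩
      have hev : {u | |v u - v x| ≤ r} ∈ nhdsWithin x (Icc t₁ t₂) := by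
        have h2 := hvx.eventually (Metric.ball_mem_nhds (v x) hr)
        filter_upwards [h2] with u hu
        rw [Real.dist_eq] at hu; exact hu.le
      obtain ⟨η, hη, hball⟩ := Metric.mem_nhdsWithin_iff.1 hev
      have hηr : ∀ u ∈ Icc t₁ t₂, |u - x| < η → |v u - v x| ≤ r := by
        intro u hu hux
        exact hball ⟨by rwa [Metric.mem_ball, Real.dist_eq], hu⟩
      set z := min (x + η / 2) (min y t₂) with hz
      have hxz : x < z := lt_min (by linarith) (lt_min hy hx2)
      have hzIcc : z ∈ Icc t₁ t₂ := ⟨hx1.trans hxz.le, (min_le_right _ _).trans (min_le_right _ _)⟩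
      have hxIcc : x ∈ Icc t₁ t₂ := ⟨hx1, hx2.le⟩
      have hsub : ∀ s ∈ Icc x z, s ∈ Icc t₁ t₂ ∧ |v s - v x| ≤ r := by
        intro s hs
        have hsIcc : s ∈ Icc t₁ t₂ := ⟨hx1.trans hs.1, hs.2.trans hzIcc.2⟩
        refine ⟨hsIcc, hηr s hsIcc ?_⟩
        have h1 : s - x ≤ η / 2 := by
          have := hs.2.trans (min_le_left _ _); linarith
        rw [abs_of_nonneg (by linarith [hs.1])]; linarith
      refine ⟨z, ?_, hxz, min_le_of_right_le (min_le_left _ _)⟩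
      -- show z ∈ S
      have key : ∫ s in (v x)..(v z), L s ≤ ∫ t in x..z, (L (v t) + ε) * |v' t| := by
        rcases le_or_gt (v x) (v z) with hvv | hvv
        · have hLz : ∀ s ∈ Icc (v x) (v z), L s ≤ L (v x) + ε / 2 := by
            intro s hs
            have h1 : |s - v x| ≤ r := by
              have h2 := (hsub z (right_mem_Icc.2 hxz.le)).2
              rw [abs_of_nonneg (by linarith [hs.1])]
              calc s - v x ≤ v z - v x := by linarith [hs.2]
                _ ≤ |v z - v x| := le_abs_self _
                _ ≤ r := h2
            have := hLr s h1
            have := abs_le.1 this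
            linarith [this.1, this.2]
          calc ∫ s in (v x)..(v z), L s ≤ ∫ _ in (v x)..(v z), (L (v x) + ε / 2) := by
                apply intervalIntegral.integral_mono_on hvv (hL.intervalIntegrable _ _)
                  (intervalIntegrable_const) hLz
            _ = (v z - v x) * (L (v x) + ε / 2) := by
                rw [intervalIntegral.integral_const, smul_eq_mul]
            _ = (∫ t in x..z, v' t) * (L (v x) + ε / 2) := by
                have hzx : v z - v x = ∫ t in x..z, v' t := by
                  rw [hvAC z hzIcc, hvAC x hxIcc, add_sub_add_left_eq_sub]
                  exact intervalIntegral.integral_interval_sub_left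
                    (hv'ii t₁ z (left_mem_Icc.2 ht) hzIcc hzIcc.1)
                    (hv'ii t₁ x (left_mem_Icc.2 ht) hxIcc hx1)
                rw [hzx]
            _ ≤ (∫ t in x..z, |v' t|) * (L (v x) + ε / 2) := by
                apply mul_le_mul_of_nonneg_right _ (add_nonneg (hL0 _) (by positivity))
                apply intervalIntegral.integral_mono_on hxz.le
                  (hv'ii x z hxIcc hzIcc hxz.le) (hv'ii x z hxIcc hzIcc hxz.le).abs
                intro s _; exact le_abs_self _
            _ = ∫ t in x..z, (L (v x) + ε / 2) * |v' t| := by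
                rw [intervalIntegral.integral_const_mul]; ring
            _ ≤ ∫ t in x..z, (L (v t) + ε) * |v' t| := by
                apply intervalIntegral.integral_mono_on hxz.le
                  (((hv'ii x z hxIcc hzIcc hxz.le).abs).const_mul _)
                  (hΦii x z hxIcc hzIcc hxz.le)
                intro s hs
                apply mul_le_mul_of_nonneg_right _ (abs_nonneg _)
                have h1 := hLr (v s) (hsub s hs).2
                have := (abs_le.1 h1).1
                linarith
        · calc ∫ s in (v x)..(v z), L s = -∫ s in (v z)..(v x), L s := by
                rw [intervalIntegral.integral_symm]
            _ ≤ 0 := by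
                simp only [neg_nonpos]
                apply intervalIntegral.integral_nonneg hvv.le
                intro s _; exact hL0 s
            _ ≤ ∫ t in x..z, (L (v t) + ε) * |v' t| := by
                apply intervalIntegral.integral_nonneg hxz.le
                intro s _; exact hΦ0 s
      have hsplit1 : ∫ s in (v t₁)..(v z), L s
          = (∫ s in (v t₁)..(v x), L s) + ∫ s in (v x)..(v z), L s := by
        rw [intervalIntegral.integral_add_adjacent_intervals (hL.intervalIntegrable _ _)
          (hL.intervalIntegrable _ _)]
      have hsplit2 : ∫ t in t₁..z, (L (v t) + ε) * |v' t|
          = (∫ t in t₁..x, (L (v t) + ε) * |v' t|) + ∫ t in x..z, (L (v t) + ε) * |v' t| := by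
        rw [intervalIntegral.integral_add_adjacent_intervals
          (hΦii t₁ x (left_mem_Icc.2 ht) hxIcc hx1) (hΦii x z hxIcc hzIcc hxz.le)]
      have hxS' : ∫ s in (v t₁)..(v x), L s ≤ ∫ t in t₁..x, (L (v t) + ε) * |v' t| := hxS
      simp only [hS, mem_setOf_eq]
      rw [hsplit1, hsplit2]
      exact add_le_add hxS' key
  exact main ⟨ht, le_refl t₂⟩

lemma subst_ineq (t₁ t₂ : ℝ) (ht : t₁ ≤ t₂)
    (v v' : ℝ → ℝ)
    (hv' : IntegrableOn v' (Icc t₁ t₂))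
    (hvAC : ∀ t ∈ Icc t₁ t₂, v t = v t₁ + ∫ s in t₁..t, v' s)
    (L : ℝ → ℝ) (hL : Continuous L) (hL0 : ∀ y, 0 ≤ L y) :
    ∫ s in (v t₁)..(v t₂), L s ≤ ∫ t in t₁..t₂, L (v t) * |v' t| := by
  have hvcont : ContinuousOn v (Icc t₁ t₂) := by
    have h1 : ContinuousOn (fun u => v t₁ + ∫ s in Ioc t₁ u, v' s) (Icc t₁ t₂) :=
      continuousOn_const.add (continuousOn_primitive hv')
    refine ContinuousOn.congr h1 fun u hu => ?_
    rw [hvAC u hu, intervalIntegral.integral_of_le hu.1]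
  have habs : IntegrableOn (fun t => |v' t|) (Icc t₁ t₂) := hv'.abs
  have habsii : IntervalIntegrable (fun t => |v' t|) volume t₁ t₂ := by
    rw [intervalIntegrable_iff_integrableOn_Icc_of_le ht]; exact habs
  have hLvii : IntervalIntegrable (fun t => L (v t) * |v' t|) volume t₁ t₂ := by
    rw [intervalIntegrable_iff_integrableOn_Icc_of_le ht]
    exact IntegrableOn.continuousOn_mul (hL.comp_continuousOn hvcont) habs isCompact_Icc
  refine le_of_forall_pos_le_add fun c hc => ?_
  set I := ∫ t in t₁..t₂, |v' t| with hI
  have hI0 : 0 ≤ I := intervalIntegral.integral_nonneg ht fun t _ => abs_nonneg _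
  have hε : 0 < c / (I + 1) := by positivity
  calc ∫ s in (v t₁)..(v t₂), L s
      ≤ ∫ t in t₁..t₂, (L (v t) + c / (I + 1)) * |v' t| :=
        subst_ineq_eps t₁ t₂ ht v v' hv' hvAC L hL hL0 _ hε
    _ = (∫ t in t₁..t₂, L (v t) * |v' t|) + (c / (I + 1)) * I := by
        rw [hI, ← intervalIntegral.integral_const_mul,
          ← intervalIntegral.integral_add hLvii (habsii.const_mul _)]
        congr 1; funext t; ring
    _ ≤ (∫ t in t₁..t₂, L (v t) * |v' t|) + c := by
        have : (c / (I + 1)) * I ≤ c := by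
          rw [div_mul_eq_mul_div, div_le_iff₀ (by linarith)]
          nlinarith
        linarith

lemma bihari_truncated (t₁ t₂ : ℝ) (ht : t₁ ≤ t₂)
    (v v' : ℝ → ℝ)
    (hv' : IntegrableOn v' (Icc t₁ t₂))
    (hvAC : ∀ t ∈ Icc t₁ t₂, v t = v t₁ + ∫ s in t₁..t, v' s)
    (ψ : ℝ → ℝ) (hψmeas : Measurable ψ) (hψpos : ∀ s > (0:ℝ), 0 < ψ s)
    (m M : ℝ) (hm0 : 0 < m) (hrange : ∀ t ∈ Icc t₁ t₂, v t ∈ Icc m M)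
    (h1ψint : IntegrableOn (fun s => 1 / ψ s) (Icc m M))
    (g : ℝ → ℝ) (hg : IntegrableOn g (Icc t₁ t₂))
    (hg0 : ∀ t ∈ Icc t₁ t₂, 0 ≤ g t)
    (hgrowth : ∀ᵐ t ∂(volume.restrict (Icc t₁ t₂)), |v' t| ≤ ψ (v t) * g t)
    (hmono : v t₁ ≤ v t₂)
    (C : ℝ) (hC : 0 ≤ C) :
    ∫ s in Ioc (v t₁) (v t₂), max (min (1 / ψ s) C) 0 ≤ ∫ t in t₁..t₂, g t := by
  set q : ℝ → ℝ := fun s => max (min (1 / ψ s) C) 0 with hq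
  have hq0 : ∀ s, 0 ≤ q s := fun s => le_max_right _ _
  have hqC : ∀ s, q s ≤ C := fun s => max_le (min_le_right _ _) hC
  have hqle : ∀ s, 0 < s → q s ≤ 1 / ψ s := by
    intro s hs
    have h := hψpos s hs
    exact max_le (min_le_left _ _) (by positivity)
  have hqmeas : Measurable q :=
    ((measurable_const.div hψmeas).min measurable_const).max measurable_const
  have hAB : Icc (v t₁) (v t₂) ⊆ Icc m M := by
    have h1 := hrange t₁ (left_mem_Icc.2 ht)
    have h2 := hrange t₂ (right_mem_Icc.2 ht)
    exact Icc_subset_Icc h1.1 h2.2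
  have hABIoc : Ioc (v t₁) (v t₂) ⊆ Icc m M := Ioc_subset_Icc_self.trans hAB
  have hqint : IntegrableOn q (Icc m M) := by
    refine Integrable.mono' (g := fun _ => C) (integrableOn_const measure_Icc_lt_top.ne)
      hqmeas.aestronglyMeasurable ?_
    exact Filter.Eventually.of_forall fun s => by
      rw [Real.norm_eq_abs, abs_of_nonneg (hq0 s)]; exact hqC s
  have hqintAB : IntegrableOn q (Ioc (v t₁) (v t₂)) := hqint.mono_set hABIoc
  refine le_of_forall_pos_le_add fun δ hδ => ?_
  -- Vitali–Carathéodory: upper semicontinuous minorant F of q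
  set fnn : ℝ → NNReal := fun s => (q s).toNNReal with hfnn
  have hfnncoe : ∀ s, ((fnn s : ℝ)) = q s := fun s => Real.coe_toNNReal _ (hq0 s)
  have hfnnint : Integrable (fun x => ((fnn x : ℝ))) (volume.restrict (Icc m M)) := by
    refine hqint.congr ?_
    exact Filter.Eventually.of_forall fun s => (hfnncoe s).symm
  obtain ⟨gn, hgle, hgusc, hgint, hgclose⟩ :=
    exists_upperSemicontinuous_le_integral_le fnn hfnnint hδ
  set F : ℝ → ℝ := fun s => (gn s : ℝ) with hF
  have hF0 : ∀ s, 0 ≤ F s := fun s => (gn s).coe_nonneg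
  have hFq : ∀ s, F s ≤ q s := fun s => by
    rw [hF, ← hfnncoe s]; exact_mod_cast hgle s
  have hFC : ∀ s, F s ≤ C := fun s => (hFq s).trans (hqC s)
  -- sup-convolution approximations
  set Fk : ℕ → ℝ → ℝ := fun k x => ⨆ y : ℝ, (F y - k * |x - y|) with hFk
  have hbdd : ∀ (k : ℕ) (x : ℝ), BddAbove (range fun y => F y - (k : ℝ) * |x - y|) := by
    intro k x
    refine ⟨C, ?_⟩
    rintro _ ⟨y, rfl⟩
    show F y - (k : ℝ) * |x - y| ≤ C
    have := mul_nonneg (Nat.cast_nonneg (α := ℝ) k) (abs_nonneg (x - y))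
    linarith [hFC y]
  have hFkF : ∀ k x, F x ≤ Fk k x := by
    intro k x
    have := le_ciSup (hbdd k x) x
    simpa using this
  have hFk0 : ∀ k x, 0 ≤ Fk k x := fun k x => (hF0 x).trans (hFkF k x)
  have hFkC : ∀ k x, Fk k x ≤ C := by
    intro k x
    refine ciSup_le fun y => ?_
    show F y - (k : ℝ) * |x - y| ≤ C
    have := mul_nonneg (Nat.cast_nonneg (α := ℝ) k) (abs_nonneg (x - y))
    linarith [hFC y]
  have hlip : ∀ (k : ℕ) (x x' : ℝ), Fk k x ≤ Fk k x' + k * |x - x'| := by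
    intro k x x'
    have key : ∀ y, F y - (k : ℝ) * |x - y| ≤ Fk k x' + k * |x - x'| := by
      intro y
      have h1 : F y - (k : ℝ) * |x' - y| ≤ Fk k x' := le_ciSup (hbdd k x') y
      have h2 : |x' - y| ≤ |x - y| + |x - x'| := by
        have h3 := abs_sub_abs_le_abs_sub (x' - y) (x - y)
        have h4 : |(x' - y) - (x - y)| = |x - x'| := by rw [show (x' - y) - (x - y) = -(x - x') by ring, abs_neg]
        calc |x' - y| ≤ |x - y| + |(x' - y) - (x - y)| := by
              have := abs_sub_le (x' - y) (x - y) 0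
              simp only [sub_zero] at this
              linarith [abs_sub_le (x' - y) (x - y) (0:ℝ)]
          _ = |x - y| + |x - x'| := by rw [h4]
      nlinarith [Nat.cast_nonneg (α := ℝ) k]
    exact ciSup_le key
  have hFkcont : ∀ k : ℕ, Continuous (Fk k) := by
    intro k
    refine (LipschitzWith.of_dist_le_mul (K := (k : NNReal)) (f := Fk k) ?_).continuous
    intro x x'
    rw [Real.dist_eq, Real.dist_eq, abs_sub_le_iff]
    constructor
    · have := hlip k x x'; push_cast; linarith
    · have := hlip k x' x; rw [abs_sub_comm] at this; push_cast; linarith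
  have hFktendsto : ∀ x, Filter.Tendsto (fun k : ℕ => Fk k x) Filter.atTop (nhds (F x)) := by
    intro x
    rw [Metric.tendsto_atTop]
    intro δ' hδ'
    -- upper semicontinuity of F at x
    obtain ⟨r, hr, hru⟩ : ∃ r > 0, ∀ y, |y - x| < r → F y < F x + δ' / 2 := by
      have husc : ∀ᶠ y in nhds x, gn y < (gn x + (δ' / 2).toNNReal) := by
        apply hgusc x
        have : (0:ℝ) < δ' / 2 := by positivity
        exact lt_add_of_pos_right _ (by simp [Real.toNNReal_pos.2 this])
      rw [Metric.eventually_nhds_iff] at husc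
      obtain ⟨r, hr, h⟩ := husc
      refine ⟨r, hr, fun y hy => ?_⟩
      have h2 := h (show dist y x < r by rwa [Real.dist_eq])
      have h3 : (gn y : ℝ) < ((gn x + (δ' / 2).toNNReal : NNReal) : ℝ) := by exact_mod_cast h2
      rw [NNReal.coe_add, Real.coe_toNNReal _ (by positivity : (0:ℝ) ≤ δ' / 2)] at h3
      exact h3
    refine ⟨⌈C / r⌉₊ + 1, fun k hk => ?_⟩
    have hkr : C ≤ (k : ℝ) * r := by
      have h1 : C / r ≤ ⌈C / r⌉₊ := Nat.le_ceil _
      have h2 : (⌈C / r⌉₊ : ℝ) ≤ k := by exact_mod_cast (Nat.le_of_succ_le hk)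
      rw [div_le_iff₀ hr] at h1
      nlinarith
    have hup : Fk k x ≤ F x + δ' / 2 := by
      refine ciSup_le fun y => ?_
      rcases lt_or_ge (|x - y|) r with hxy | hxy
      · have := hru y (by rwa [abs_sub_comm])
        have h2 := mul_nonneg (Nat.cast_nonneg (α := ℝ) k) (abs_nonneg (x - y))
        linarith
      · have h2 : C ≤ (k : ℝ) * |x - y| := by
          calc C ≤ (k:ℝ) * r := hkr
            _ ≤ (k:ℝ) * |x - y| := by
              exact mul_le_mul_of_nonneg_left hxy (Nat.cast_nonneg _)
        have := hF0 x
        have := hFC y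
        have : F y - (k:ℝ) * |x - y| ≤ 0 := by linarith [hFC y]
        linarith [hF0 x]
    have hlow := hFkF k x
    rw [Real.dist_eq, abs_of_nonneg (by linarith)]
    linarith
  -- continuity of v on Icc
  have hvcont : ContinuousOn v (Icc t₁ t₂) := by
    have h1 : ContinuousOn (fun u => v t₁ + ∫ s in Ioc t₁ u, v' s) (Icc t₁ t₂) :=
      continuousOn_const.add (continuousOn_primitive hv')
    refine ContinuousOn.congr h1 fun u hu => ?_
    rw [hvAC u hu, intervalIntegral.integral_of_le hu.1]
  -- the substitution inequality for each k, as set integrals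
  have hineq : ∀ k : ℕ, ∫ s in Ioc (v t₁) (v t₂), Fk k s
      ≤ ∫ t in Ioc t₁ t₂, Fk k (v t) * |v' t| := by
    intro k
    have h := subst_ineq t₁ t₂ ht v v' hv' hvAC (Fk k) (hFkcont k) (fun y => hFk0 k y)
    rwa [intervalIntegral.integral_of_le hmono, intervalIntegral.integral_of_le ht] at h
  -- measurability helpers on (t₁, t₂]
  have hv'asm : AEStronglyMeasurable v' (volume.restrict (Ioc t₁ t₂)) :=
    (hv'.mono_set Ioc_subset_Icc_self).aestronglyMeasurable
  have habs_int : IntegrableOn (fun t => |v' t|) (Ioc t₁ t₂) :=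
    (hv'.mono_set Ioc_subset_Icc_self).abs
  have hFkv_asm : ∀ k : ℕ, AEStronglyMeasurable (fun t => Fk k (v t) * |v' t|)
      (volume.restrict (Ioc t₁ t₂)) := by
    intro k
    have h1 : AEStronglyMeasurable (fun t => Fk k (v t)) (volume.restrict (Ioc t₁ t₂)) := by
      have h2 : ContinuousOn (fun t => Fk k (v t)) (Icc t₁ t₂) :=
        (hFkcont k).comp_continuousOn hvcont
      exact (h2.aestronglyMeasurable measurableSet_Icc).mono_measure
        (Measure.restrict_mono Ioc_subset_Icc_self le_rfl)
    exact h1.mul ((hv'.mono_set Ioc_subset_Icc_self).abs.aestronglyMeasurable)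
  -- dominated convergence on both sides
  have hL1 : Filter.Tendsto (fun k : ℕ => ∫ s in Ioc (v t₁) (v t₂), Fk k s)
      Filter.atTop (nhds (∫ s in Ioc (v t₁) (v t₂), F s)) := by
    refine tendsto_integral_of_dominated_convergence (fun _ => C)
      (fun k => (hFkcont k).aestronglyMeasurable.restrict) ?_ ?_ ?_
    · exact integrableOn_const measure_Ioc_lt_top.ne
    · intro k
      exact Filter.Eventually.of_forall fun s => by
        rw [Real.norm_eq_abs, abs_of_nonneg (hFk0 k s)]; exact hFkC k s
    · exact Filter.Eventually.of_forall fun s => hFktendsto s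
  have hR1 : Filter.Tendsto (fun k : ℕ => ∫ t in Ioc t₁ t₂, Fk k (v t) * |v' t|)
      Filter.atTop (nhds (∫ t in Ioc t₁ t₂, F (v t) * |v' t|)) := by
    refine tendsto_integral_of_dominated_convergence (fun t => C * |v' t|)
      hFkv_asm ?_ ?_ ?_
    · exact habs_int.const_mul C
    · intro k
      refine Filter.Eventually.of_forall fun t => ?_
      rw [Real.norm_eq_abs, abs_mul, abs_abs, abs_of_nonneg (hFk0 k (v t))]
      exact mul_le_mul_of_nonneg_right (hFkC k (v t)) (abs_nonneg _)
    · exact Filter.Eventually.of_forall fun t =>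
        (hFktendsto (v t)).mul_const _
  have hFF : ∫ s in Ioc (v t₁) (v t₂), F s ≤ ∫ t in Ioc t₁ t₂, F (v t) * |v' t| :=
    le_of_tendsto_of_tendsto' hL1 hR1 hineq
  -- (a) ∫ q ≤ ∫ F + δ on Ioc (v t₁) (v t₂)
  have hFintAB : IntegrableOn F (Ioc (v t₁) (v t₂)) := IntegrableOn.mono_set hgint hABIoc
  have hfnnq : ∫ x in Icc m M, ((fnn x : ℝ)) = ∫ x in Icc m M, q x :=
    integral_congr_ae (Filter.Eventually.of_forall fun s => hfnncoe s)
  have ha : ∫ s in Ioc (v t₁) (v t₂), q s ≤ (∫ s in Ioc (v t₁) (v t₂), F s) + δ := by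
    have h1 : ∫ s in Ioc (v t₁) (v t₂), (q s - F s) ≤ ∫ s in Icc m M, (q s - F s) := by
      refine setIntegral_mono_set (hqint.sub hgint) ?_ (HasSubset.Subset.eventuallyLE hABIoc)
      exact Filter.Eventually.of_forall fun s => sub_nonneg.2 (hFq s)
    rw [integral_sub hqintAB hFintAB, integral_sub hqint hgint] at h1
    rw [hfnnq] at hgclose
    linarith
  -- (b) ∫ F(v)·|v'| ≤ ∫ g on Ioc t₁ t₂
  have hFv_int : Integrable (fun t => F (v t) * |v' t|) (volume.restrict (Ioc t₁ t₂)) := by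
    refine Integrable.mono' (habs_int.const_mul C)
      (aestronglyMeasurable_of_tendsto_ae Filter.atTop hFkv_asm
        (Filter.Eventually.of_forall fun t => (hFktendsto (v t)).mul_const _)) ?_
    refine Filter.Eventually.of_forall fun t => ?_
    rw [Real.norm_eq_abs, abs_mul, abs_abs, abs_of_nonneg (hF0 (v t))]
    exact mul_le_mul_of_nonneg_right (hFC (v t)) (abs_nonneg _)
  have hb : ∫ t in Ioc t₁ t₂, F (v t) * |v' t| ≤ ∫ t in Ioc t₁ t₂, g t := by
    refine integral_mono_ae hFv_int (hg.mono_set Ioc_subset_Icc_self) ?_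
    have hgr : ∀ᵐ t ∂(volume.restrict (Ioc t₁ t₂)), |v' t| ≤ ψ (v t) * g t :=
      ae_mono (Measure.restrict_mono Ioc_subset_Icc_self le_rfl) hgrowth
    have hmem : ∀ᵐ t ∂(volume.restrict (Ioc t₁ t₂)), t ∈ Ioc t₁ t₂ :=
      ae_restrict_mem measurableSet_Ioc
    filter_upwards [hgr, hmem] with t h1 h2
    have hvt : 0 < v t := hm0.trans_le (hrange t (Ioc_subset_Icc_self h2)).1
    have hψt : 0 < ψ (v t) := hψpos _ hvt
    have hgt : 0 ≤ g t := hg0 t (Ioc_subset_Icc_self h2)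
    have h3 : F (v t) ≤ 1 / ψ (v t) := (hFq (v t)).trans (hqle (v t) hvt)
    calc F (v t) * |v' t| ≤ F (v t) * (ψ (v t) * g t) :=
          mul_le_mul_of_nonneg_left h1 (hF0 (v t))
      _ ≤ (1 / ψ (v t)) * (ψ (v t) * g t) :=
          mul_le_mul_of_nonneg_right h3 (by positivity)
      _ = g t := by field_simp
  -- assemble
  calc ∫ s in Ioc (v t₁) (v t₂), q s ≤ (∫ s in Ioc (v t₁) (v t₂), F s) + δ := ha
    _ ≤ (∫ t in Ioc t₁ t₂, F (v t) * |v' t|) + δ := by linarith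
    _ ≤ (∫ t in Ioc t₁ t₂, g t) + δ := by linarith
    _ = (∫ t in t₁..t₂, g t) + δ := by rw [intervalIntegral.integral_of_le ht]

/-- Bihari-type change-of-variables inequality: if `v` is absolutely continuous and
positive on `[t₁,t₂]`, `1/ψ` is locally integrable on `(0,∞)`, and
`|v'| ≤ ψ(v)·g` a.e. with `g ∈ L¹` nonnegative, then
`∫_{v(t₁)}^{v(t₂)} ds/ψ(s) ≤ ∫_{t₁}^{t₂} g`. -/
theorem bihari_change_of_variables (t₁ t₂ : ℝ) (ht : t₁ < t₂)
    (v v' : ℝ → ℝ)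
    (hv' : IntegrableOn v' (Icc t₁ t₂))
    (hvAC : ∀ t ∈ Icc t₁ t₂, v t = v t₁ + ∫ s in t₁..t, v' s)
    (hvpos : ∀ t ∈ Icc t₁ t₂, 0 < v t)
    (ψ : ℝ → ℝ) (hψmeas : Measurable ψ) (hψpos : ∀ s > (0:ℝ), 0 < ψ s)
    (hψloc : ∀ c d : ℝ, 0 < c → c ≤ d → IntegrableOn (fun s => 1 / ψ s) (Icc c d))
    (g : ℝ → ℝ) (hg : IntegrableOn g (Icc t₁ t₂))
    (hg0 : ∀ t ∈ Icc t₁ t₂, 0 ≤ g t)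
    (hgrowth : ∀ᵐ t ∂(volume.restrict (Icc t₁ t₂)), |v' t| ≤ ψ (v t) * g t)
    (hmono : v t₁ ≤ v t₂) :
    ∫ s in (v t₁)..(v t₂), 1 / ψ s ≤ ∫ t in t₁..t₂, g t := by
  have ht' : t₁ ≤ t₂ := ht.le
  have hvcont : ContinuousOn v (Icc t₁ t₂) := by
    have h1 : ContinuousOn (fun u => v t₁ + ∫ s in Ioc t₁ u, v' s) (Icc t₁ t₂) :=
      continuousOn_const.add (continuousOn_primitive hv')
    refine ContinuousOn.congr h1 fun u hu => ?_
    rw [hvAC u hu, intervalIntegral.integral_of_le hu.1]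
  obtain ⟨tm, htm, hminOn⟩ := isCompact_Icc.exists_isMinOn (nonempty_Icc.2 ht') hvcont
  obtain ⟨tM, htM, hmaxOn⟩ := isCompact_Icc.exists_isMaxOn (nonempty_Icc.2 ht') hvcont
  set m := v tm with hm
  set M := v tM with hM
  have hm0 : 0 < m := hvpos tm htm
  have hrange : ∀ t ∈ Icc t₁ t₂, v t ∈ Icc m M := fun t htt =>
    ⟨isMinOn_iff.1 hminOn t htt, isMaxOn_iff.1 hmaxOn t htt⟩
  have hmM : m ≤ M := (hrange tm htm).2
  have h1ψint : IntegrableOn (fun s => 1 / ψ s) (Icc m M) := hψloc m M hm0 hmM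
  have key : ∀ n : ℕ, ∫ s in Ioc (v t₁) (v t₂), max (min (1 / ψ s) n) 0
      ≤ ∫ t in t₁..t₂, g t := fun n =>
    bihari_truncated t₁ t₂ ht' v v' hv' hvAC ψ hψmeas hψpos m M hm0 hrange h1ψint
      g hg hg0 hgrowth hmono n (Nat.cast_nonneg n)
  have hA0 : 0 < v t₁ := hvpos t₁ (left_mem_Icc.2 ht')
  have hABIoc : Ioc (v t₁) (v t₂) ⊆ Icc m M :=
    Ioc_subset_Icc_self.trans
      (Icc_subset_Icc (hrange t₁ (left_mem_Icc.2 ht')).1 (hrange t₂ (right_mem_Icc.2 ht')).2)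
  have hint : IntegrableOn (fun s => 1 / ψ s) (Ioc (v t₁) (v t₂)) :=
    h1ψint.mono_set hABIoc
  have hintn : ∀ n : ℕ, IntegrableOn (fun s => max (min (1 / ψ s) n) 0)
      (Ioc (v t₁) (v t₂)) := by
    intro n
    refine Integrable.mono' (g := fun _ => (n:ℝ))
      (integrableOn_const measure_Ioc_lt_top.ne)
      (((measurable_const.div hψmeas).min measurable_const).max
        measurable_const).aestronglyMeasurable ?_
    refine Filter.Eventually.of_forall fun s => ?_
    rw [Real.norm_eq_abs, abs_of_nonneg (le_max_right _ _)]
    exact max_le (min_le_right _ _) (Nat.cast_nonneg n)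
  have hmono' : ∀ᵐ s ∂(volume.restrict (Ioc (v t₁) (v t₂))),
      Monotone fun n : ℕ => max (min (1 / ψ s) n) 0 := by
    refine Filter.Eventually.of_forall fun s i j hij => ?_
    exact max_le_max (min_le_min le_rfl (Nat.cast_le.2 hij)) le_rfl
  have htend : ∀ᵐ s ∂(volume.restrict (Ioc (v t₁) (v t₂))),
      Filter.Tendsto (fun n : ℕ => max (min (1 / ψ s) n) 0) Filter.atTop
        (nhds (1 / ψ s)) := by
    filter_upwards [ae_restrict_mem measurableSet_Ioc] with s hs
    have hψs : 0 < ψ s := hψpos s (hA0.trans hs.1)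
    have h0 : 0 ≤ 1 / ψ s := by positivity
    refine tendsto_const_nhds.congr' ?_
    filter_upwards [Filter.eventually_ge_atTop ⌈1 / ψ s⌉₊] with n hn
    rw [min_eq_left ((Nat.le_ceil _).trans (Nat.cast_le.2 hn)), max_eq_left h0]
  have hlim := integral_tendsto_of_tendsto_of_monotone hintn hint hmono' htend
  rw [intervalIntegral.integral_of_le hmono]
  exact le_of_tendsto' hlim key
end
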